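/- arXiv:2002.09952 — 5 statements merged into one kernel-verified Lean document; each statement's English description precedes it below -/
import Mathlib

section
/- For every Weyl group of the types A_n, B_n, D_n, E_6, E_7, E_8, F_4, G_2 and every integer d ≥ 1, the product ∏_{i=1}^{n} (d·h + e_i − 1) is divisible by ∏_{i=1}^{n} (e_i + 1); that is, the positive Fuss-Catalan number C_d^+(W) is a (positive) integer. -/
/-- The simply-laced and non-simply-laced finite Weyl group types considered. -/
inductive WeylType where
  | A (n : ℕ)
  | B (n : ℕ)
  | D (n : ℕ)
  | E6
  | E7
  | E8
  | F4
  | G2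

/-- The exponents `e_1, …, e_n` of the Weyl group of the given type. -/
def WeylType.exponents : WeylType → List ℕ
  | A n => (List.range n).map (· + 1)
  | B n => (List.range n).map (fun i => 2 * i + 1)
  | D n => (List.range (n - 1)).map (fun i => 2 * i + 1) ++ [n - 1]
  | E6 => [1, 4, 5, 7, 8, 11]
  | E7 => [1, 5, 7, 9, 11, 13, 17]
  | E8 => [1, 7, 11, 13, 17, 19, 23, 29]
  | F4 => [1, 5, 7, 11]
  | G2 => [1, 5]

/-- The Coxeter number `h` of the Weyl group of the given type. -/
def WeylType.coxeterNumber : WeylType → ℕ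
  | A n => n + 1
  | B n => 2 * n
  | D n => 2 * (n - 1)
  | E6 => 12
  | E7 => 18
  | E8 => 30
  | F4 => 12
  | G2 => 6

/-- Admissible ranks for each family. -/
def WeylType.valid : WeylType → Prop
  | A n => 1 ≤ n
  | B n => 2 ≤ n
  | D n => 4 ≤ n
  | _ => True

/- ### Auxiliary lemmas -/

lemma FCaux.listProdModEq (M : ℕ) (f g : ℕ × ℕ → ℕ) :
    ∀ ps : List (ℕ × ℕ), (∀ p ∈ ps, f p ≡ g p [MOD M]) →
      (ps.map f).prod ≡ (ps.map g).prod [MOD M]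
  | [], _ => by simp; rfl
  | p :: ps, h => by
    simp only [List.map_cons, List.prod_cons]
    exact (h p (by simp)).mul (FCaux.listProdModEq M f g ps fun q hq => h q (by simp [hq]))

/-- If `M` divides the product `∏ (aᵢ r + cᵢ)` for every residue `r < T`, where `T` is a
period (i.e. `M ∣ aᵢ T`), then it divides the product for every `d`. -/
lemma FCaux.prodDvdOfPeriod (M T : ℕ) (hT : 0 < T) (ps : List (ℕ × ℕ))
    (ha : ∀ p ∈ ps, M ∣ p.1 * T)
    (h : ∀ r < T, M ∣ (ps.map (fun p => p.1 * r + p.2)).prod) (d : ℕ) :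
    M ∣ (ps.map (fun p => p.1 * d + p.2)).prod := by
  have hr : d % T < T := Nat.mod_lt _ hT
  have key : (ps.map (fun p => p.1 * d + p.2)).prod ≡
      (ps.map (fun p => p.1 * (d % T) + p.2)).prod [MOD M] := by
    apply FCaux.listProdModEq
    intro p hp
    obtain ⟨s, hs⟩ := ha p hp
    have hd' : p.1 * d = p.1 * (d % T) + M * (s * (d / T)) := by
      conv_lhs => rw [← Nat.div_add_mod d T]
      rw [Nat.mul_add, ← Nat.mul_assoc, hs]; ring
    show (p.1 * d + p.2) % M = (p.1 * (d % T) + p.2) % M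
    rw [hd']
    rw [show p.1 * (d % T) + M * (s * (d / T)) + p.2
        = p.1 * (d % T) + p.2 + M * (s * (d / T)) by ring]
    exact Nat.add_mul_mod_self_left _ _ _
  exact Nat.modEq_zero_iff_dvd.mp (key.trans (Nat.modEq_zero_iff_dvd.mpr (h _ hr)))

lemma FCaux.rangeProdAdd (m : ℕ) :
    ∀ n : ℕ, ((List.range n).map (fun i => m + i)).prod = m.ascFactorial n
  | 0 => by simp
  | n + 1 => by
    rw [List.range_succ, List.map_append, List.prod_append, FCaux.rangeProdAdd m n]
    simp [Nat.ascFactorial_succ, Nat.mul_comm]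

lemma FCaux.rangeProdFac :
    ∀ n : ℕ, ((List.range n).map (fun i => i + 2)).prod = (n + 1).factorial
  | 0 => by simp
  | n + 1 => by
    rw [List.range_succ, List.map_append, List.prod_append, FCaux.rangeProdFac n]
    simp [Nat.factorial_succ]; ring

lemma FCaux.rangeProdTwoMulSucc :
    ∀ n : ℕ, ((List.range n).map (fun i => 2 * (i + 1))).prod = 2 ^ n * n.factorial
  | 0 => by simp
  | n + 1 => by
    rw [List.range_succ, List.map_append, List.prod_append, FCaux.rangeProdTwoMulSucc n]
    simp [Nat.factorial_succ, Nat.pow_succ]; ring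

lemma FCaux.rangeProdTwoMulAdd (m : ℕ) :
    ∀ n : ℕ, ((List.range n).map (fun i => 2 * (m + i))).prod = 2 ^ n * m.ascFactorial n
  | 0 => by simp
  | n + 1 => by
    rw [List.range_succ, List.map_append, List.prod_append, FCaux.rangeProdTwoMulAdd m n]
    simp [Nat.ascFactorial_succ, Nat.pow_succ]; ring

/-- Core divisibility for type `A`. -/
lemma FCaux.coreA (n d : ℕ) (hn : 1 ≤ n) (hd : 1 ≤ d) :
    (n + 1).factorial ∣ (d * (n + 1)).ascFactorial n := by
  set m := d * (n + 1) with hm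
  rw [Nat.ascFactorial_eq_factorial_mul_choose', Nat.factorial_succ]
  set N := m + n - 1 with hN
  have hdvd : (n + 1) ∣ N.choose n := by
    have key : N.choose (n + 1) * (n + 1) = N.choose n * (N - n) := Nat.choose_succ_right_eq N n
    have hm2 : n + 1 ≤ m := by
      calc n + 1 = 1 * (n + 1) := by ring
      _ ≤ d * (n + 1) := Nat.mul_le_mul_right _ hd
    have hNn : N - n = m - 1 := by omega
    have hcop : Nat.Coprime (n + 1) (m - 1) := by
      have h2 : m = (n + 1) * (d - 1) + (n + 1) := by
        rw [hm]; cases d with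
        | zero => omega
        | succ d' => simp [Nat.succ_sub_one]; ring
      have h1 : m - 1 = n + (n + 1) * (d - 1) := by
        generalize (n + 1) * (d - 1) = x at h2 ⊢; omega
      rw [h1]
      exact (Nat.coprime_add_mul_left_right (n + 1) n (d - 1)).mpr (by simp)
    refine hcop.dvd_of_dvd_mul_right ⟨N.choose (n + 1), ?_⟩
    rw [← hNn, ← key]; ring
  rw [Nat.mul_comm (n + 1) n.factorial]
  exact Nat.mul_dvd_mul_left _ hdvd

/-- Core binomial identity for type `D`. -/
lemma FCaux.coreD (k m : ℕ) (hk : 3 ≤ k) (hm : k ≤ m) :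
    Nat.choose (m + k - 1) k * (2 * m + k - 1) =
      (k + 1) * (Nat.choose (m + k) (k + 1) + Nat.choose (m + k - 1) (k + 1)) := by
  set N := m + k - 1 with hN
  have hN1 : m + k = N + 1 := by omega
  have h2 := Nat.choose_succ_right_eq N k
  have hNk : N - k = m - 1 := by omega
  have hsum : 2 * m + k - 1 = (N + 1) + (m - 1) := by omega
  rw [hN1, hsum, Nat.mul_add]
  rw [hNk] at h2
  have e1 : N.choose k * (N + 1) = (k + 1) * (N + 1).choose (k + 1) := by
    rw [Nat.mul_comm, Nat.add_one_mul_choose_eq]; ring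
  have e2 : N.choose k * (m - 1) = (k + 1) * N.choose (k + 1) := by
    rw [← h2]; ring
  rw [e1, e2]; ring

set_option maxHeartbeats 1000000 in
/-- For every Weyl group `W` of type `A_n, B_n, D_n, E₆, E₇, E₈, F₄, G₂` and every `d ≥ 1`,
the product `∏ (d·h + e_i − 1)` is divisible by `∏ (e_i + 1)`, and the quotient — the
positive Fuss-Catalan number `C_d⁺(W)` — is a positive integer. -/
theorem positive_fuss_catalan_is_positive_integer (W : WeylType) (hW : W.valid)
    (d : ℕ) (hd : 1 ≤ d) :
    ((W.exponents.map (fun e => e + 1)).prod ∣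
        (W.exponents.map (fun e => d * W.coxeterNumber + e - 1)).prod) ∧
      0 < (W.exponents.map (fun e => d * W.coxeterNumber + e - 1)).prod /
          (W.exponents.map (fun e => e + 1)).prod := by
  have hdvd : (W.exponents.map (fun e => e + 1)).prod ∣
      (W.exponents.map (fun e => d * W.coxeterNumber + e - 1)).prod := by
    cases W with
    | A n =>
      simp only [WeylType.valid] at hW
      simp only [WeylType.exponents, WeylType.coxeterNumber, List.map_map]
      have e1 : ((fun e => e + 1) ∘ (fun i : ℕ => i + 1)) = fun i : ℕ => i + 2 := by
        funext i; simp only [Function.comp_apply]; try omega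
      have e2 : ((fun e => d * (n + 1) + e - 1) ∘ (fun i : ℕ => i + 1))
          = fun i : ℕ => d * (n + 1) + i := by
        have key : ∀ x i : ℕ, x + (i + 1) - 1 = x + i := fun x i => by omega
        funext i; exact key _ i
      rw [e1, e2, FCaux.rangeProdFac, FCaux.rangeProdAdd]
      exact FCaux.coreA n d hW hd
    | B n =>
      simp only [WeylType.valid] at hW
      simp only [WeylType.exponents, WeylType.coxeterNumber, List.map_map]
      have e1 : ((fun e => e + 1) ∘ (fun i : ℕ => 2 * i + 1)) = fun i : ℕ => 2 * (i + 1) := by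
        funext i; simp only [Function.comp_apply]; try omega
      have e2 : ((fun e => d * (2 * n) + e - 1) ∘ (fun i : ℕ => 2 * i + 1))
          = fun i : ℕ => 2 * (d * n + i) := by
        have key : ∀ x i : ℕ, 2 * x + (2 * i + 1) - 1 = 2 * (x + i) := fun x i => by omega
        funext i
        show d * (2 * n) + (2 * i + 1) - 1 = 2 * (d * n + i)
        rw [show d * (2 * n) = 2 * (d * n) from by ring]
        exact key _ i
      rw [e1, e2, FCaux.rangeProdTwoMulSucc, FCaux.rangeProdTwoMulAdd]
      exact Nat.mul_dvd_mul_left _ (Nat.factorial_dvd_ascFactorial _ _)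
    | D n =>
      simp only [WeylType.valid] at hW
      obtain ⟨k, rfl⟩ : ∃ k, n = k + 1 := ⟨n - 1, by omega⟩
      have hk : 3 ≤ k := by omega
      simp only [WeylType.exponents, WeylType.coxeterNumber, Nat.add_sub_cancel,
        List.map_append, List.map_map, List.map_cons, List.map_nil, List.prod_append,
        List.prod_cons, List.prod_nil, Nat.mul_one]
      have e1 : ((fun e => e + 1) ∘ (fun i : ℕ => 2 * i + 1)) = fun i : ℕ => 2 * (i + 1) := by
        funext i; simp only [Function.comp_apply]; try omega
      have e2 : ((fun e => d * (2 * k) + e - 1) ∘ (fun i : ℕ => 2 * i + 1))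
          = fun i : ℕ => 2 * (d * k + i) := by
        have key : ∀ x i : ℕ, 2 * x + (2 * i + 1) - 1 = 2 * (x + i) := fun x i => by omega
        funext i
        show d * (2 * k) + (2 * i + 1) - 1 = 2 * (d * k + i)
        rw [show d * (2 * k) = 2 * (d * k) from by ring]
        exact key _ i
      rw [e1, e2, FCaux.rangeProdTwoMulSucc, FCaux.rangeProdTwoMulAdd]
      set m := d * k with hm
      have hm3 : k ≤ m := by
        calc k = 1 * k := by ring
        _ ≤ d * k := Nat.mul_le_mul_right _ hd
      have hlast : d * (2 * k) + k - 1 = 2 * m + k - 1 := by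
        rw [show d * (2 * k) = 2 * m from by rw [hm]; ring]
      rw [hlast, Nat.ascFactorial_eq_factorial_mul_choose']
      refine ⟨(m + k).choose (k + 1) + (m + k - 1).choose (k + 1), ?_⟩
      rw [Nat.mul_assoc (2 ^ k) (k.factorial) _, Nat.mul_assoc (2 ^ k) _ _,
        Nat.mul_assoc k.factorial _ _, FCaux.coreD k m hk hm3]
      ring
    | E6 =>
      simp only [WeylType.exponents, WeylType.coxeterNumber, List.map_cons, List.map_nil,
        List.prod_cons, List.prod_nil]
      have hp0 : (128 : ℕ) ∣ (12 * d + 0) * ((12 * d + 3) * ((12 * d + 4) * ((12 * d + 6) * ((12 * d + 7) * ((12 * d + 10) * 1))))) := by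
        have harith : ∀ r < 32, (128 : ℕ) ∣ (12 * r + 0) * ((12 * r + 3) * ((12 * r + 4) * ((12 * r + 6) * ((12 * r + 7) * ((12 * r + 10) * 1))))) := by decide
        have hlist := FCaux.prodDvdOfPeriod 128 32 (by norm_num)
          [((12:ℕ),(0:ℕ)),((12:ℕ),(3:ℕ)),((12:ℕ),(4:ℕ)),((12:ℕ),(6:ℕ)),((12:ℕ),(7:ℕ)),((12:ℕ),(10:ℕ))] (by decide)
          (by intro r hr
              simp only [List.map_cons, List.map_nil, List.prod_cons, List.prod_nil]
              exact harith r hr) d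
        simpa only [List.map_cons, List.map_nil, List.prod_cons, List.prod_nil] using hlist
      have hp1 : (81 : ℕ) ∣ (12 * d + 0) * ((12 * d + 3) * ((12 * d + 4) * ((12 * d + 6) * ((12 * d + 7) * ((12 * d + 10) * 1))))) := by
        have harith : ∀ r < 27, (81 : ℕ) ∣ (12 * r + 0) * ((12 * r + 3) * ((12 * r + 4) * ((12 * r + 6) * ((12 * r + 7) * ((12 * r + 10) * 1))))) := by decide
        have hlist := FCaux.prodDvdOfPeriod 81 27 (by norm_num)
          [((12:ℕ),(0:ℕ)),((12:ℕ),(3:ℕ)),((12:ℕ),(4:ℕ)),((12:ℕ),(6:ℕ)),((12:ℕ),(7:ℕ)),((12:ℕ),(10:ℕ))] (by decide)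
          (by intro r hr
              simp only [List.map_cons, List.map_nil, List.prod_cons, List.prod_nil]
              exact harith r hr) d
        simpa only [List.map_cons, List.map_nil, List.prod_cons, List.prod_nil] using hlist
      have hp2 : (5 : ℕ) ∣ (12 * d + 0) * ((12 * d + 3) * ((12 * d + 4) * ((12 * d + 6) * ((12 * d + 7) * ((12 * d + 10) * 1))))) := by
        have harith : ∀ r < 5, (5 : ℕ) ∣ (12 * r + 0) * ((12 * r + 3) * ((12 * r + 4) * ((12 * r + 6) * ((12 * r + 7) * ((12 * r + 10) * 1))))) := by decide
        have hlist := FCaux.prodDvdOfPeriod 5 5 (by norm_num)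
          [((12:ℕ),(0:ℕ)),((12:ℕ),(3:ℕ)),((12:ℕ),(4:ℕ)),((12:ℕ),(6:ℕ)),((12:ℕ),(7:ℕ)),((12:ℕ),(10:ℕ))] (by decide)
          (by intro r hr
              simp only [List.map_cons, List.map_nil, List.prod_cons, List.prod_nil]
              exact harith r hr) d
        simpa only [List.map_cons, List.map_nil, List.prod_cons, List.prod_nil] using hlist
      have hq1 : (10368 : ℕ) ∣ (12 * d + 0) * ((12 * d + 3) * ((12 * d + 4) * ((12 * d + 6) * ((12 * d + 7) * ((12 * d + 10) * 1))))) :=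
        (show Nat.Coprime 128 81 by norm_num).mul_dvd_of_dvd_of_dvd hp0 hp1
      have hq2 : (51840 : ℕ) ∣ (12 * d + 0) * ((12 * d + 3) * ((12 * d + 4) * ((12 * d + 6) * ((12 * d + 7) * ((12 * d + 10) * 1))))) :=
        (show Nat.Coprime 10368 5 by norm_num).mul_dvd_of_dvd_of_dvd hq1 hp2
      have r0 : d * 12 + 1 - 1 = 12 * d + 0 := by omega
      have r1 : d * 12 + 4 - 1 = 12 * d + 3 := by omega
      have r2 : d * 12 + 5 - 1 = 12 * d + 4 := by omega
      have r3 : d * 12 + 7 - 1 = 12 * d + 6 := by omega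
      have r4 : d * 12 + 8 - 1 = 12 * d + 7 := by omega
      have r5 : d * 12 + 11 - 1 = 12 * d + 10 := by omega
      rw [r0, r1, r2, r3, r4, r5]
      exact hq2
    | E7 =>
      simp only [WeylType.exponents, WeylType.coxeterNumber, List.map_cons, List.map_nil,
        List.prod_cons, List.prod_nil]
      have hp0 : (8 : ℕ) ∣ (9 * d + 0) * ((9 * d + 2) * ((9 * d + 3) * ((9 * d + 4) * ((9 * d + 5) * ((9 * d + 6) * ((9 * d + 8) * 1)))))) := by
        have harith : ∀ r < 8, (8 : ℕ) ∣ (9 * r + 0) * ((9 * r + 2) * ((9 * r + 3) * ((9 * r + 4) * ((9 * r + 5) * ((9 * r + 6) * ((9 * r + 8) * 1)))))) := by decide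
        have hlist := FCaux.prodDvdOfPeriod 8 8 (by norm_num)
          [((9:ℕ),(0:ℕ)),((9:ℕ),(2:ℕ)),((9:ℕ),(3:ℕ)),((9:ℕ),(4:ℕ)),((9:ℕ),(5:ℕ)),((9:ℕ),(6:ℕ)),((9:ℕ),(8:ℕ))] (by decide)
          (by intro r hr
              simp only [List.map_cons, List.map_nil, List.prod_cons, List.prod_nil]
              exact harith r hr) d
        simpa only [List.map_cons, List.map_nil, List.prod_cons, List.prod_nil] using hlist
      have hp1 : (81 : ℕ) ∣ (9 * d + 0) * ((9 * d + 2) * ((9 * d + 3) * ((9 * d + 4) * ((9 * d + 5) * ((9 * d + 6) * ((9 * d + 8) * 1)))))) := by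
        have harith : ∀ r < 9, (81 : ℕ) ∣ (9 * r + 0) * ((9 * r + 2) * ((9 * r + 3) * ((9 * r + 4) * ((9 * r + 5) * ((9 * r + 6) * ((9 * r + 8) * 1)))))) := by decide
        have hlist := FCaux.prodDvdOfPeriod 81 9 (by norm_num)
          [((9:ℕ),(0:ℕ)),((9:ℕ),(2:ℕ)),((9:ℕ),(3:ℕ)),((9:ℕ),(4:ℕ)),((9:ℕ),(5:ℕ)),((9:ℕ),(6:ℕ)),((9:ℕ),(8:ℕ))] (by decide)
          (by intro r hr
              simp only [List.map_cons, List.map_nil, List.prod_cons, List.prod_nil]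
              exact harith r hr) d
        simpa only [List.map_cons, List.map_nil, List.prod_cons, List.prod_nil] using hlist
      have hp2 : (5 : ℕ) ∣ (9 * d + 0) * ((9 * d + 2) * ((9 * d + 3) * ((9 * d + 4) * ((9 * d + 5) * ((9 * d + 6) * ((9 * d + 8) * 1)))))) := by
        have harith : ∀ r < 5, (5 : ℕ) ∣ (9 * r + 0) * ((9 * r + 2) * ((9 * r + 3) * ((9 * r + 4) * ((9 * r + 5) * ((9 * r + 6) * ((9 * r + 8) * 1)))))) := by decide
        have hlist := FCaux.prodDvdOfPeriod 5 5 (by norm_num)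
          [((9:ℕ),(0:ℕ)),((9:ℕ),(2:ℕ)),((9:ℕ),(3:ℕ)),((9:ℕ),(4:ℕ)),((9:ℕ),(5:ℕ)),((9:ℕ),(6:ℕ)),((9:ℕ),(8:ℕ))] (by decide)
          (by intro r hr
              simp only [List.map_cons, List.map_nil, List.prod_cons, List.prod_nil]
              exact harith r hr) d
        simpa only [List.map_cons, List.map_nil, List.prod_cons, List.prod_nil] using hlist
      have hp3 : (7 : ℕ) ∣ (9 * d + 0) * ((9 * d + 2) * ((9 * d + 3) * ((9 * d + 4) * ((9 * d + 5) * ((9 * d + 6) * ((9 * d + 8) * 1)))))) := by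
        have harith : ∀ r < 7, (7 : ℕ) ∣ (9 * r + 0) * ((9 * r + 2) * ((9 * r + 3) * ((9 * r + 4) * ((9 * r + 5) * ((9 * r + 6) * ((9 * r + 8) * 1)))))) := by decide
        have hlist := FCaux.prodDvdOfPeriod 7 7 (by norm_num)
          [((9:ℕ),(0:ℕ)),((9:ℕ),(2:ℕ)),((9:ℕ),(3:ℕ)),((9:ℕ),(4:ℕ)),((9:ℕ),(5:ℕ)),((9:ℕ),(6:ℕ)),((9:ℕ),(8:ℕ))] (by decide)
          (by intro r hr
              simp only [List.map_cons, List.map_nil, List.prod_cons, List.prod_nil]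
              exact harith r hr) d
        simpa only [List.map_cons, List.map_nil, List.prod_cons, List.prod_nil] using hlist
      have hq1 : (648 : ℕ) ∣ (9 * d + 0) * ((9 * d + 2) * ((9 * d + 3) * ((9 * d + 4) * ((9 * d + 5) * ((9 * d + 6) * ((9 * d + 8) * 1)))))) :=
        (show Nat.Coprime 8 81 by norm_num).mul_dvd_of_dvd_of_dvd hp0 hp1
      have hq2 : (3240 : ℕ) ∣ (9 * d + 0) * ((9 * d + 2) * ((9 * d + 3) * ((9 * d + 4) * ((9 * d + 5) * ((9 * d + 6) * ((9 * d + 8) * 1)))))) :=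
        (show Nat.Coprime 648 5 by norm_num).mul_dvd_of_dvd_of_dvd hq1 hp2
      have hq3 : (22680 : ℕ) ∣ (9 * d + 0) * ((9 * d + 2) * ((9 * d + 3) * ((9 * d + 4) * ((9 * d + 5) * ((9 * d + 6) * ((9 * d + 8) * 1)))))) :=
        (show Nat.Coprime 3240 7 by norm_num).mul_dvd_of_dvd_of_dvd hq2 hp3
      have r0 : d * 18 + 1 - 1 = 2 * (9 * d + 0) := by omega
      have r1 : d * 18 + 5 - 1 = 2 * (9 * d + 2) := by omega
      have r2 : d * 18 + 7 - 1 = 2 * (9 * d + 3) := by omega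
      have r3 : d * 18 + 9 - 1 = 2 * (9 * d + 4) := by omega
      have r4 : d * 18 + 11 - 1 = 2 * (9 * d + 5) := by omega
      have r5 : d * 18 + 13 - 1 = 2 * (9 * d + 6) := by omega
      have r6 : d * 18 + 17 - 1 = 2 * (9 * d + 8) := by omega
      rw [r0, r1, r2, r3, r4, r5, r6]
      have heq : (2 * (9 * d + 0)) * ((2 * (9 * d + 2)) * ((2 * (9 * d + 3)) * ((2 * (9 * d + 4)) * ((2 * (9 * d + 5)) * ((2 * (9 * d + 6)) * ((2 * (9 * d + 8)) * 1)))))) = 128 * ((9 * d + 0) * ((9 * d + 2) * ((9 * d + 3) * ((9 * d + 4) * ((9 * d + 5) * ((9 * d + 6) * ((9 * d + 8) * 1))))))) := by ring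
      rw [heq]
      exact Nat.mul_dvd_mul_left 128 hq3
    | E8 =>
      simp only [WeylType.exponents, WeylType.coxeterNumber, List.map_cons, List.map_nil,
        List.prod_cons, List.prod_nil]
      have hp0 : (64 : ℕ) ∣ (15 * d + 0) * ((15 * d + 3) * ((15 * d + 5) * ((15 * d + 6) * ((15 * d + 8) * ((15 * d + 9) * ((15 * d + 11) * ((15 * d + 14) * 1))))))) := by
        have harith : ∀ r < 64, (64 : ℕ) ∣ (15 * r + 0) * ((15 * r + 3) * ((15 * r + 5) * ((15 * r + 6) * ((15 * r + 8) * ((15 * r + 9) * ((15 * r + 11) * ((15 * r + 14) * 1))))))) := by decide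
        have hlist := FCaux.prodDvdOfPeriod 64 64 (by norm_num)
          [((15:ℕ),(0:ℕ)),((15:ℕ),(3:ℕ)),((15:ℕ),(5:ℕ)),((15:ℕ),(6:ℕ)),((15:ℕ),(8:ℕ)),((15:ℕ),(9:ℕ)),((15:ℕ),(11:ℕ)),((15:ℕ),(14:ℕ))] (by decide)
          (by intro r hr
              simp only [List.map_cons, List.map_nil, List.prod_cons, List.prod_nil]
              exact harith r hr) d
        simpa only [List.map_cons, List.map_nil, List.prod_cons, List.prod_nil] using hlist
      have hp1 : (243 : ℕ) ∣ (15 * d + 0) * ((15 * d + 3) * ((15 * d + 5) * ((15 * d + 6) * ((15 * d + 8) * ((15 * d + 9) * ((15 * d + 11) * ((15 * d + 14) * 1))))))) := by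
        have harith : ∀ r < 81, (243 : ℕ) ∣ (15 * r + 0) * ((15 * r + 3) * ((15 * r + 5) * ((15 * r + 6) * ((15 * r + 8) * ((15 * r + 9) * ((15 * r + 11) * ((15 * r + 14) * 1))))))) := by decide
        have hlist := FCaux.prodDvdOfPeriod 243 81 (by norm_num)
          [((15:ℕ),(0:ℕ)),((15:ℕ),(3:ℕ)),((15:ℕ),(5:ℕ)),((15:ℕ),(6:ℕ)),((15:ℕ),(8:ℕ)),((15:ℕ),(9:ℕ)),((15:ℕ),(11:ℕ)),((15:ℕ),(14:ℕ))] (by decide)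
          (by intro r hr
              simp only [List.map_cons, List.map_nil, List.prod_cons, List.prod_nil]
              exact harith r hr) d
        simpa only [List.map_cons, List.map_nil, List.prod_cons, List.prod_nil] using hlist
      have hp2 : (25 : ℕ) ∣ (15 * d + 0) * ((15 * d + 3) * ((15 * d + 5) * ((15 * d + 6) * ((15 * d + 8) * ((15 * d + 9) * ((15 * d + 11) * ((15 * d + 14) * 1))))))) := by
        have harith : ∀ r < 5, (25 : ℕ) ∣ (15 * r + 0) * ((15 * r + 3) * ((15 * r + 5) * ((15 * r + 6) * ((15 * r + 8) * ((15 * r + 9) * ((15 * r + 11) * ((15 * r + 14) * 1))))))) := by decide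
        have hlist := FCaux.prodDvdOfPeriod 25 5 (by norm_num)
          [((15:ℕ),(0:ℕ)),((15:ℕ),(3:ℕ)),((15:ℕ),(5:ℕ)),((15:ℕ),(6:ℕ)),((15:ℕ),(8:ℕ)),((15:ℕ),(9:ℕ)),((15:ℕ),(11:ℕ)),((15:ℕ),(14:ℕ))] (by decide)
          (by intro r hr
              simp only [List.map_cons, List.map_nil, List.prod_cons, List.prod_nil]
              exact harith r hr) d
        simpa only [List.map_cons, List.map_nil, List.prod_cons, List.prod_nil] using hlist
      have hp3 : (7 : ℕ) ∣ (15 * d + 0) * ((15 * d + 3) * ((15 * d + 5) * ((15 * d + 6) * ((15 * d + 8) * ((15 * d + 9) * ((15 * d + 11) * ((15 * d + 14) * 1))))))) := by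
        have harith : ∀ r < 7, (7 : ℕ) ∣ (15 * r + 0) * ((15 * r + 3) * ((15 * r + 5) * ((15 * r + 6) * ((15 * r + 8) * ((15 * r + 9) * ((15 * r + 11) * ((15 * r + 14) * 1))))))) := by decide
        have hlist := FCaux.prodDvdOfPeriod 7 7 (by norm_num)
          [((15:ℕ),(0:ℕ)),((15:ℕ),(3:ℕ)),((15:ℕ),(5:ℕ)),((15:ℕ),(6:ℕ)),((15:ℕ),(8:ℕ)),((15:ℕ),(9:ℕ)),((15:ℕ),(11:ℕ)),((15:ℕ),(14:ℕ))] (by decide)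
          (by intro r hr
              simp only [List.map_cons, List.map_nil, List.prod_cons, List.prod_nil]
              exact harith r hr) d
        simpa only [List.map_cons, List.map_nil, List.prod_cons, List.prod_nil] using hlist
      have hq1 : (15552 : ℕ) ∣ (15 * d + 0) * ((15 * d + 3) * ((15 * d + 5) * ((15 * d + 6) * ((15 * d + 8) * ((15 * d + 9) * ((15 * d + 11) * ((15 * d + 14) * 1))))))) :=
        (show Nat.Coprime 64 243 by norm_num).mul_dvd_of_dvd_of_dvd hp0 hp1
      have hq2 : (388800 : ℕ) ∣ (15 * d + 0) * ((15 * d + 3) * ((15 * d + 5) * ((15 * d + 6) * ((15 * d + 8) * ((15 * d + 9) * ((15 * d + 11) * ((15 * d + 14) * 1))))))) :=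
        (show Nat.Coprime 15552 25 by norm_num).mul_dvd_of_dvd_of_dvd hq1 hp2
      have hq3 : (2721600 : ℕ) ∣ (15 * d + 0) * ((15 * d + 3) * ((15 * d + 5) * ((15 * d + 6) * ((15 * d + 8) * ((15 * d + 9) * ((15 * d + 11) * ((15 * d + 14) * 1))))))) :=
        (show Nat.Coprime 388800 7 by norm_num).mul_dvd_of_dvd_of_dvd hq2 hp3
      have r0 : d * 30 + 1 - 1 = 2 * (15 * d + 0) := by omega
      have r1 : d * 30 + 7 - 1 = 2 * (15 * d + 3) := by omega
      have r2 : d * 30 + 11 - 1 = 2 * (15 * d + 5) := by omega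
      have r3 : d * 30 + 13 - 1 = 2 * (15 * d + 6) := by omega
      have r4 : d * 30 + 17 - 1 = 2 * (15 * d + 8) := by omega
      have r5 : d * 30 + 19 - 1 = 2 * (15 * d + 9) := by omega
      have r6 : d * 30 + 23 - 1 = 2 * (15 * d + 11) := by omega
      have r7 : d * 30 + 29 - 1 = 2 * (15 * d + 14) := by omega
      rw [r0, r1, r2, r3, r4, r5, r6, r7]
      have heq : (2 * (15 * d + 0)) * ((2 * (15 * d + 3)) * ((2 * (15 * d + 5)) * ((2 * (15 * d + 6)) * ((2 * (15 * d + 8)) * ((2 * (15 * d + 9)) * ((2 * (15 * d + 11)) * ((2 * (15 * d + 14)) * 1))))))) = 256 * ((15 * d + 0) * ((15 * d + 3) * ((15 * d + 5) * ((15 * d + 6) * ((15 * d + 8) * ((15 * d + 9) * ((15 * d + 11) * ((15 * d + 14) * 1)))))))) := by ring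
      rw [heq]
      exact Nat.mul_dvd_mul_left 256 hq3
    | F4 =>
      simp only [WeylType.exponents, WeylType.coxeterNumber, List.map_cons, List.map_nil,
        List.prod_cons, List.prod_nil]
      have hp0 : (128 : ℕ) ∣ (12 * d + 0) * ((12 * d + 4) * ((12 * d + 6) * ((12 * d + 10) * 1))) := by
        have harith : ∀ r < 32, (128 : ℕ) ∣ (12 * r + 0) * ((12 * r + 4) * ((12 * r + 6) * ((12 * r + 10) * 1))) := by decide
        have hlist := FCaux.prodDvdOfPeriod 128 32 (by norm_num)
          [((12:ℕ),(0:ℕ)),((12:ℕ),(4:ℕ)),((12:ℕ),(6:ℕ)),((12:ℕ),(10:ℕ))] (by decide)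
          (by intro r hr
              simp only [List.map_cons, List.map_nil, List.prod_cons, List.prod_nil]
              exact harith r hr) d
        simpa only [List.map_cons, List.map_nil, List.prod_cons, List.prod_nil] using hlist
      have hp1 : (9 : ℕ) ∣ (12 * d + 0) * ((12 * d + 4) * ((12 * d + 6) * ((12 * d + 10) * 1))) := by
        have harith : ∀ r < 3, (9 : ℕ) ∣ (12 * r + 0) * ((12 * r + 4) * ((12 * r + 6) * ((12 * r + 10) * 1))) := by decide
        have hlist := FCaux.prodDvdOfPeriod 9 3 (by norm_num)
          [((12:ℕ),(0:ℕ)),((12:ℕ),(4:ℕ)),((12:ℕ),(6:ℕ)),((12:ℕ),(10:ℕ))] (by decide)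
          (by intro r hr
              simp only [List.map_cons, List.map_nil, List.prod_cons, List.prod_nil]
              exact harith r hr) d
        simpa only [List.map_cons, List.map_nil, List.prod_cons, List.prod_nil] using hlist
      have hq1 : (1152 : ℕ) ∣ (12 * d + 0) * ((12 * d + 4) * ((12 * d + 6) * ((12 * d + 10) * 1))) :=
        (show Nat.Coprime 128 9 by norm_num).mul_dvd_of_dvd_of_dvd hp0 hp1
      have r0 : d * 12 + 1 - 1 = 12 * d + 0 := by omega
      have r1 : d * 12 + 5 - 1 = 12 * d + 4 := by omega
      have r2 : d * 12 + 7 - 1 = 12 * d + 6 := by omega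
      have r3 : d * 12 + 11 - 1 = 12 * d + 10 := by omega
      rw [r0, r1, r2, r3]
      exact hq1
    | G2 =>
      simp only [WeylType.exponents, WeylType.coxeterNumber, List.map_cons, List.map_nil,
        List.prod_cons, List.prod_nil]
      have hp0 : (12 : ℕ) ∣ (6 * d + 0) * ((6 * d + 4) * 1) := by
        have harith : ∀ r < 2, (12 : ℕ) ∣ (6 * r + 0) * ((6 * r + 4) * 1) := by decide
        have hlist := FCaux.prodDvdOfPeriod 12 2 (by norm_num)
          [((6:ℕ),(0:ℕ)),((6:ℕ),(4:ℕ))] (by decide)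
          (by intro r hr
              simp only [List.map_cons, List.map_nil, List.prod_cons, List.prod_nil]
              exact harith r hr) d
        simpa only [List.map_cons, List.map_nil, List.prod_cons, List.prod_nil] using hlist
      have r0 : d * 6 + 1 - 1 = 6 * d + 0 := by omega
      have r1 : d * 6 + 5 - 1 = 6 * d + 4 := by omega
      rw [r0, r1]
      exact hp0
  refine ⟨hdvd, ?_⟩
  have hh : 2 ≤ W.coxeterNumber := by
    cases W <;> simp only [WeylType.valid] at hW <;>
      simp only [WeylType.coxeterNumber] <;> omega
  have hh2 : 2 ≤ d * W.coxeterNumber := by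
    calc (2 : ℕ) ≤ W.coxeterNumber := hh
    _ = 1 * W.coxeterNumber := by ring
    _ ≤ d * W.coxeterNumber := Nat.mul_le_mul_right _ hd
  have hnum : 0 < (W.exponents.map (fun e => d * W.coxeterNumber + e - 1)).prod := by
    apply List.prod_pos
    intro x hx
    rw [List.mem_map] at hx
    obtain ⟨e, _, rfl⟩ := hx
    revert hh2; generalize d * W.coxeterNumber = X; intro hh2; omega
  have hden : 0 < (W.exponents.map (fun e => e + 1)).prod := by
    apply List.prod_pos
    intro x hx
    rw [List.mem_map] at hx
    obtain ⟨e, _, rfl⟩ := hx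
    omega
  exact Nat.div_pos (Nat.le_of_dvd hnum hdvd) hden
end

section
/- Under the standing assumption that every silting object P of a thick subcategory 𝒰 of a triangulated category T induces a bounded t-structure T = P[<0]^⊥ ⊥ P[≥0]^⊥, the map sending a silting object P to its silting heart ℋ_P = P[<0]^⊥ ∩ P[>0]^⊥[1] is a poset isomorphism from silt 𝒰 (ordered by Q ≥ P iff Hom(Q, P[>0]) = 0) onto the set of silting hearts (ordered by ℋ ≥ ℋ' iff Hom(ℋ', ℋ[<0]) = 0). -/
open CategoryTheory CategoryTheory.Limits CategoryTheory.Pretriangulated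

universe v u

variable {C : Type u} [Category.{v} C] [Preadditive C] [HasZeroObject C]
  [HasShift C ℤ] [∀ n : ℤ, (shiftFunctor C n).Additive] [Pretriangulated C]

/-- The shift `S⟦n⟧` of a class of objects (closed under isomorphism). -/
def shiftSet (S : Set C) (n : ℤ) : Set C :=
  {X : C | ∃ Y ∈ S, Nonempty (X ≅ Y⟦n⟧)}

/-- A class of objects is thick if it contains the zero objects and is closed under
isomorphisms, shifts, cones of morphisms (two-out-of-three in triangles) and retracts
(direct summands). -/
def IsThick (S : Set C) : Prop :=
  (∀ X : C, Limits.IsZero X → X ∈ S) ∧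
  (∀ X Y : C, (X ≅ Y) → X ∈ S → Y ∈ S) ∧
  (∀ X : C, ∀ n : ℤ, X ∈ S → X⟦n⟧ ∈ S) ∧
  (∀ T ∈ distTriang C, T.obj₁ ∈ S → T.obj₂ ∈ S → T.obj₃ ∈ S) ∧
  (∀ X Y : C, ∀ r : X ⟶ Y, ∀ s : Y ⟶ X, s ≫ r = 𝟙 Y → X ∈ S → Y ∈ S)

/-- The thick subcategory generated by a class of objects. -/
def thickClosure (S : Set C) : Set C :=
  ⋂₀ {P : Set C | S ⊆ P ∧ IsThick P}

/-- `P` is a silting object of the thick subcategory `𝒰`: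
`Hom(P, P[i]) = 0` for `i > 0` and `thick(P) = 𝒰`. -/
def IsSilting (𝒰 : Set C) (P : C) : Prop :=
  (∀ i : ℤ, 0 < i → ∀ f : P ⟶ P⟦i⟧, f = 0) ∧ thickClosure {P} = 𝒰

/-- The aisle `P[<0]^⊥` of the silting t-structure associated with `P`. -/
def siltAisle (P : C) : Set C :=
  {X : C | ∀ i : ℤ, i < 0 → ∀ f : P⟦i⟧ ⟶ X, f = 0}

/-- The coaisle `P[≥0]^⊥` of the silting t-structure associated with `P`. -/
def siltCoaisle (P : C) : Set C :=
  {X : C | ∀ i : ℤ, 0 ≤ i → ∀ f : P⟦i⟧ ⟶ X, f = 0}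

/-- `(U, V)` is a bounded t-structure on `C`. -/
def IsBoundedTStructure (U V : Set C) : Prop :=
  (∀ X ∈ U, ∀ Y ∈ V, ∀ f : X ⟶ Y, f = 0) ∧
  (∀ X : C, ∃ (A B : C) (_ : A ∈ U) (_ : B ∈ V)
    (f : A ⟶ X) (g : X ⟶ B) (h : B ⟶ A⟦(1 : ℤ)⟧),
      Triangle.mk f g h ∈ distTriang C) ∧
  (V = {X : C | ∀ A ∈ U, ∀ f : A ⟶ X, f = 0}) ∧
  (U = {Y : C | ∀ B ∈ V, ∀ f : Y ⟶ B, f = 0}) ∧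
  (∀ X ∈ U, X⟦(1 : ℤ)⟧ ∈ U) ∧
  (∀ X : C, ∃ i : ℤ, X ∈ shiftSet U i) ∧
  (∀ X : C, ∃ i : ℤ, X ∈ shiftSet V i)

/-- The silting heart `ℋ_P = P[<0]^⊥ ∩ (P[≥0]^⊥)[1]` associated with a silting object `P`. -/
def siltHeart (P : C) : Set C :=
  siltAisle P ∩ shiftSet (siltCoaisle P) 1

section SiltingAux

variable {U V : Set C}

lemma zh_src_iso {X X' Y : C} (e : X ≅ X') (h : ∀ f : X' ⟶ Y, f = 0) (f : X ⟶ Y) : f = 0 := by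
  have h2 := h (e.inv ≫ f)
  rw [← Iso.hom_inv_id_assoc e f, h2, Limits.comp_zero]

lemma zh_tgt_iso {X Y Y' : C} (e : Y' ≅ Y) (h : ∀ f : X ⟶ Y', f = 0) (f : X ⟶ Y) : f = 0 := by
  have h2 := h (f ≫ e.inv)
  rw [← Category.comp_id f, ← e.inv_hom_id, ← Category.assoc, h2, Limits.zero_comp]

lemma zh_shift {X Y : C} (n : ℤ) (h : ∀ f : X ⟶ Y, f = 0) (f : X⟦n⟧ ⟶ Y⟦n⟧) : f = 0 := by
  obtain ⟨g, rfl⟩ := (shiftFunctor C n).map_surjective f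
  rw [h g, Functor.map_zero]

lemma zh_trans {X Y : C} (a b c d : ℤ) (h : a + d = c + b)
    (hv : ∀ f : X⟦c⟧ ⟶ Y⟦d⟧, f = 0) (f : X⟦a⟧ ⟶ Y⟦b⟧) : f = 0 := by
  have h1 : ∀ g : (X⟦c⟧)⟦b - d⟧ ⟶ (Y⟦d⟧)⟦b - d⟧, g = 0 := zh_shift _ hv
  have e1 : (Y⟦d⟧)⟦b - d⟧ ≅ Y⟦b⟧ := (shiftFunctorAdd' C d (b - d) b (by ring)).symm.app Y
  have e2 : (X⟦c⟧)⟦b - d⟧ ≅ X⟦a⟧ := (shiftFunctorAdd' C c (b - d) a (by omega)).symm.app X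
  have h2 : ∀ g : (X⟦c⟧)⟦b - d⟧ ⟶ Y⟦b⟧, g = 0 := fun g => zh_tgt_iso e1 h1 g
  exact zh_src_iso e2.symm h2 f

lemma zh_src_unshift0 {X Y : C} (h : ∀ f : X⟦(0 : ℤ)⟧ ⟶ Y, f = 0) (f : X ⟶ Y) : f = 0 :=
  zh_src_iso ((shiftFunctorZero C ℤ).app X).symm h f

lemma zh_src_shift0 {X Y : C} (h : ∀ f : X ⟶ Y, f = 0) (f : X⟦(0 : ℤ)⟧ ⟶ Y) : f = 0 :=
  zh_src_iso ((shiftFunctorZero C ℤ).app X) h f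

lemma zh_tgt_unshift0 {X Y : C} (h : ∀ f : X ⟶ Y⟦(0 : ℤ)⟧, f = 0) (f : X ⟶ Y) : f = 0 :=
  zh_tgt_iso ((shiftFunctorZero C ℤ).app Y) h f

lemma zh_tgt_shift0 {X Y : C} (h : ∀ f : X ⟶ Y, f = 0) (f : X ⟶ Y⟦(0 : ℤ)⟧) : f = 0 :=
  zh_tgt_iso ((shiftFunctorZero C ℤ).app Y).symm h f

/-- From `Hom(X, Y⟦m⟧) = 0` to `Hom(X⟦-m⟧, Y) = 0`. -/
lemma van_to_shift {X Y : C} {m c : ℤ} (hc : c = -m) (h : ∀ f : X ⟶ Y⟦m⟧, f = 0)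
    (g : X⟦c⟧ ⟶ Y) : g = 0 := by
  subst hc
  exact zh_tgt_unshift0 (zh_trans (-m) 0 0 m (by ring) (fun g => zh_src_shift0 h g)) g

/-- From `Hom(X⟦c⟧, Y) = 0` to `Hom(X, Y⟦-c⟧) = 0`. -/
lemma shift_to_van {X Y : C} {m c : ℤ} (hc : c = -m) (h : ∀ g : X⟦c⟧ ⟶ Y, g = 0)
    (f : X ⟶ Y⟦m⟧) : f = 0 := by
  subst hc
  exact zh_src_unshift0 (zh_trans 0 m (-m) 0 (by ring) (fun g => zh_tgt_shift0 h g)) f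

/-- From `Hom(X, Y⟦b - a⟧) = 0` to `Hom(X⟦a⟧, Y⟦b⟧) = 0`. -/
lemma van_to_shift2 {X Y : C} {a b m : ℤ} (hm : m = b - a) (h : ∀ f : X ⟶ Y⟦m⟧, f = 0)
    (g : X⟦a⟧ ⟶ Y⟦b⟧) : g = 0 := by
  subst hm
  exact zh_trans a b 0 (b - a) (by ring) (fun g => zh_src_shift0 h g) g

lemma mem_U_iso (t : IsBoundedTStructure U V) {X X' : C} (e : X ≅ X') (h : X' ∈ U) : X ∈ U := by
  rw [t.2.2.2.1] at h ⊢
  exact fun B hB f => zh_src_iso e (fun g => h B hB g) f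

lemma mem_V_iso (t : IsBoundedTStructure U V) {X X' : C} (e : X ≅ X') (h : X' ∈ V) : X ∈ V := by
  rw [t.2.2.1] at h ⊢
  exact fun A hA f => zh_tgt_iso e.symm (fun g => h A hA g) f

lemma shiftU (t : IsBoundedTStructure U V) {X : C} (hX : X ∈ U) :
    ∀ n : ℤ, 0 ≤ n → X⟦n⟧ ∈ U := by
  intro n hn
  refine Int.le_induction (motive := fun n _ => X⟦n⟧ ∈ U) ?_ ?_ n hn
  · exact mem_U_iso t ((shiftFunctorZero C ℤ).app X) hX
  · intro m _ ih
    have e : (X⟦m⟧)⟦(1 : ℤ)⟧ ≅ X⟦m + 1⟧ := (shiftFunctorAdd' C m 1 (m + 1) rfl).symm.app X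
    exact mem_U_iso t e.symm (t.2.2.2.2.1 _ ih)

lemma shiftV (t : IsBoundedTStructure U V) {X : C} (hX : X ∈ V) :
    ∀ n : ℤ, n ≤ 0 → X⟦n⟧ ∈ V := by
  intro n hn
  rw [t.2.2.1]
  intro A hA f
  have h0 : ∀ g : A⟦-n⟧ ⟶ X, g = 0 := t.1 _ (shiftU t hA (-n) (by omega)) X hX
  have h1 : ∀ g : A⟦-n⟧ ⟶ X⟦(0 : ℤ)⟧, g = 0 := fun g => zh_tgt_shift0 h0 g
  exact zh_src_unshift0 (zh_trans 0 n (-n) 0 (by ring) h1) f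

lemma orthShift (t : IsBoundedTStructure U V) {X Y : C} (hX : X ∈ U) (hY : Y ∈ V)
    (a b : ℤ) (hab : b ≤ a) (f : X⟦a⟧ ⟶ Y⟦b⟧) : f = 0 := by
  refine zh_trans a b (a - b) 0 (by ring) (fun g => ?_) f
  exact zh_tgt_shift0 (t.1 _ (shiftU t hX (a - b) (by omega)) Y hY) g

lemma devissage_V (t : IsBoundedTStructure U V) (X : C)
    (hX : ∀ H, H ∈ U → H ∈ shiftSet V 1 → ∀ m : ℤ, m ≤ -1 → ∀ f : X ⟶ H⟦m⟧, f = 0) :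
    ∀ Z ∈ V, ∀ f : X ⟶ Z, f = 0 := by
  have aux : ∀ n : ℕ, ∀ Z ∈ V, Z⟦(n : ℤ)⟧ ∈ U → ∀ k : ℤ, k ≤ 0 → ∀ f : X ⟶ Z⟦k⟧, f = 0 := by
    intro n
    induction n with
    | zero =>
      intro Z hZV hZU k hk f
      rw [Nat.cast_zero] at hZU
      have hid : 𝟙 Z = 0 :=
        t.1 Z (mem_U_iso t ((shiftFunctorZero C ℤ).app Z).symm hZU) Z hZV _
      calc f = f ≫ 𝟙 (Z⟦k⟧) := by rw [Category.comp_id]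
        _ = f ≫ (shiftFunctor C k).map (𝟙 Z) := by rw [CategoryTheory.Functor.map_id]
        _ = 0 := by rw [hid, Functor.map_zero, Limits.comp_zero]
    | succ n ih =>
      intro Z hZV hZU k hk f
      push_cast at hZU
      obtain ⟨A, B, hA, hB, a, b, c, hT⟩ := t.2.1 (Z⟦(1 : ℤ)⟧)
      set T := Triangle.mk a b c with hTdef
      -- `A⟦-1⟧ ∈ V`, so that `A` is in the heart
      have hAV : A⟦(-1 : ℤ)⟧ ∈ V := by
        rw [t.2.2.1]
        intro Y hY g
        have key : ∀ h : Y⟦(1 : ℤ)⟧ ⟶ A, h = 0 := by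
          intro h
          have h1 : h ≫ T.invRotate.mor₂ = 0 :=
            orthShift t hY hZV 1 1 le_rfl (h ≫ T.invRotate.mor₂)
          obtain ⟨g', hg'⟩ := Triangle.coyoneda_exact₂ _ (inv_rot_of_distTriang T hT) h h1
          have hg'0 : g' = 0 := orthShift t hY hB 1 (-1) (by omega) g'
          rw [hg', hg'0, Limits.zero_comp]
          rfl
        exact shift_to_van (m := -1) (by omega) key g
      have eA : (A⟦(-1 : ℤ)⟧)⟦(1 : ℤ)⟧ ≅ A⟦(0 : ℤ)⟧ := (shiftFunctorAdd' C (-1) 1 0 (by ring)).symm.app A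
      have hAH : A ∈ shiftSet V 1 :=
        ⟨A⟦(-1 : ℤ)⟧, hAV, ⟨(eA ≪≫ (shiftFunctorZero C ℤ).app A).symm⟩⟩
      -- `B⟦n⟧ ∈ U`
      have hBU : B⟦(n : ℤ)⟧ ∈ U := by
        rw [t.2.2.2.1]
        intro W hW f'
        have key : ∀ g : B ⟶ W⟦-(n : ℤ)⟧, g = 0 := by
          intro g
          have h1 : T.rotate.mor₁ ≫ g = 0 := by
            refine zh_trans 1 (-(n : ℤ)) ((n : ℤ) + 1) 0 (by ring) (fun g' => ?_) _
            exact zh_tgt_shift0 (t.1 _ hZU W hW) g'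
          obtain ⟨g', hg'⟩ := Triangle.yoneda_exact₂ _ (rot_of_distTriang T hT) g h1
          have hg'0 : g' = 0 := orthShift t hA hW 1 (-(n : ℤ)) (by omega) g'
          rw [hg', hg'0, Limits.comp_zero]
          rfl
        exact van_to_shift (m := -(n : ℤ)) (by omega) key f'
      -- conclude by exactness
      have key2 : ∀ ψ : X⟦1 - k⟧ ⟶ Z⟦(1 : ℤ)⟧, ψ = 0 := by
        intro ψ
        have h1 : ψ ≫ T.mor₂ = 0 :=
          van_to_shift (m := k - 1) (by omega) (ih B hB hBU (k - 1) (by omega)) _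
        obtain ⟨χ, hχ⟩ := Triangle.coyoneda_exact₂ _ hT ψ h1
        have hχ0 : χ = 0 :=
          van_to_shift (m := k - 1) (by omega) (hX A hA hAH (k - 1) (by omega)) χ
        rw [hχ, hχ0, Limits.zero_comp]
        rfl
      exact zh_src_unshift0 (zh_trans 0 k (1 - k) 1 (by ring) key2) f
  intro Z hZV f
  obtain ⟨i, W, hW, ⟨e⟩⟩ := t.2.2.2.2.2.1 Z
  have eW : (W⟦i⟧)⟦-i⟧ ≅ W⟦(0 : ℤ)⟧ := (shiftFunctorAdd' C i (-i) 0 (by ring)).symm.app W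
  have h1 : Z⟦-i⟧ ∈ U :=
    mem_U_iso t ((shiftFunctor C (-i)).mapIso e ≪≫ eW ≪≫ (shiftFunctorZero C ℤ).app W) hW
  have eZ2 : (Z⟦-i⟧)⟦((-i).toNat : ℤ) + i⟧ ≅ Z⟦(((-i).toNat : ℕ) : ℤ)⟧ :=
    (shiftFunctorAdd' C (-i) (((-i).toNat : ℤ) + i) ((-i).toNat : ℤ) (by omega)).symm.app Z
  have h2 : Z⟦(((-i).toNat : ℕ) : ℤ)⟧ ∈ U :=
    mem_U_iso t eZ2.symm (shiftU t h1 _ (by omega))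
  exact zh_tgt_iso ((shiftFunctorZero C ℤ).app Z) (aux (-i).toNat Z hZV h2 0 le_rfl) f

lemma devissage_U (t : IsBoundedTStructure U V) (Z : C)
    (hZ : ∀ H, H ∈ U → H ∈ shiftSet V 1 → ∀ m : ℤ, 0 ≤ m → ∀ f : H⟦m⟧ ⟶ Z, f = 0) :
    ∀ X ∈ U, ∀ f : X ⟶ Z, f = 0 := by
  have aux : ∀ n : ℕ, ∀ X ∈ U, X⟦-(n : ℤ)⟧ ∈ V → ∀ k : ℤ, 0 ≤ k → ∀ f : X⟦k⟧ ⟶ Z, f = 0 := by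
    intro n
    induction n with
    | zero =>
      intro X hXU hXV k hk f
      rw [Nat.cast_zero, neg_zero] at hXV
      have hid : 𝟙 X = 0 :=
        t.1 X hXU X (mem_V_iso t ((shiftFunctorZero C ℤ).app X).symm hXV) _
      calc f = (shiftFunctor C k).map (𝟙 X) ≫ f := by rw [CategoryTheory.Functor.map_id, Category.id_comp]
        _ = 0 := by rw [hid, Functor.map_zero, Limits.zero_comp]
    | succ n ih =>
      intro X hXU hXV k hk f
      push_cast at hXV
      obtain ⟨A, B, hA, hB, a, b, c, hT⟩ := t.2.1 (X⟦(-1 : ℤ)⟧)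
      set T := Triangle.mk a b c with hTdef
      -- `B⟦1⟧` is in the heart
      have hB1U : B⟦(1 : ℤ)⟧ ∈ U := by
        rw [t.2.2.2.1]
        intro W hW f'
        have key : ∀ g : B ⟶ W⟦(-1 : ℤ)⟧, g = 0 := by
          intro g
          have h1 : T.rotate.mor₁ ≫ g = 0 :=
            orthShift t hXU hW (-1) (-1) le_rfl (T.rotate.mor₁ ≫ g)
          obtain ⟨g', hg'⟩ := Triangle.yoneda_exact₂ _ (rot_of_distTriang T hT) g h1
          have hg'0 : g' = 0 := orthShift t hA hW 1 (-1) (by omega) g'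
          rw [hg', hg'0, Limits.comp_zero]
          rfl
        exact van_to_shift (m := -1) (by omega) key f'
      have hB1H : B⟦(1 : ℤ)⟧ ∈ shiftSet V 1 := ⟨B, hB, ⟨Iso.refl _⟩⟩
      -- `A⟦-n⟧ ∈ V`
      have hAV' : A⟦-(n : ℤ)⟧ ∈ V := by
        rw [t.2.2.1]
        intro Y hY g
        have key : ∀ h : Y⟦(n : ℤ)⟧ ⟶ A, h = 0 := by
          intro h
          have h1 : h ≫ T.invRotate.mor₂ = 0 := by
            refine zh_trans (n : ℤ) (-1) 0 (-((n : ℤ) + 1)) (by ring) (fun g' => ?_) _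
            exact zh_src_shift0 (t.1 Y hY _ hXV) g'
          obtain ⟨g', hg'⟩ := Triangle.coyoneda_exact₂ _ (inv_rot_of_distTriang T hT) h h1
          have hg'0 : g' = 0 := orthShift t hY hB (n : ℤ) (-1) (by omega) g'
          rw [hg', hg'0, Limits.zero_comp]
          rfl
        exact shift_to_van (m := -(n : ℤ)) (by omega) key g
      -- conclude by exactness
      have key : ∀ χ : T.obj₂ ⟶ Z⟦-(k + 1)⟧, χ = 0 := by
        intro χ
        have h1 : T.mor₁ ≫ χ = 0 :=
          shift_to_van (m := -(k + 1)) (by omega) (ih A hA hAV' (k + 1) (by omega)) _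
        obtain ⟨g', hg'⟩ := Triangle.yoneda_exact₂ _ hT χ h1
        have eB : (B⟦(1 : ℤ)⟧)⟦k⟧ ≅ B⟦k + 1⟧ := (shiftFunctorAdd' C 1 k (k + 1) (by ring)).symm.app B
        have hB1Z : ∀ u : B⟦k + 1⟧ ⟶ Z, u = 0 := fun u =>
          zh_src_iso eB.symm (hZ (B⟦(1 : ℤ)⟧) hB1U hB1H k hk) u
        have hg'0 : g' = 0 := shift_to_van (m := -(k + 1)) (by omega) hB1Z g'
        rw [hg', hg'0, Limits.comp_zero]
      have key2 : ∀ ψ : (X⟦(-1 : ℤ)⟧)⟦k + 1⟧ ⟶ Z, ψ = 0 := by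
        intro ψ
        have eZ0 : (Z⟦-(k + 1)⟧)⟦k + 1⟧ ≅ Z⟦(0 : ℤ)⟧ :=
          (shiftFunctorAdd' C (-(k + 1)) (k + 1) 0 (by ring)).symm.app Z
        have eZ : Z ≅ (Z⟦-(k + 1)⟧)⟦k + 1⟧ := (eZ0 ≪≫ (shiftFunctorZero C ℤ).app Z).symm
        obtain ⟨χ, hχ⟩ := (shiftFunctor C (k + 1)).map_surjective (ψ ≫ eZ.hom)
        replace hχ : 0 = ψ ≫ eZ.hom := by
          rw [← hχ]; exact ((congrArg (shiftFunctor C (k + 1)).map (key χ)).trans (Functor.map_zero _ _ _)).symm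
        calc ψ = (ψ ≫ eZ.hom) ≫ eZ.inv := by rw [Category.assoc, eZ.hom_inv_id, Category.comp_id]
          _ = 0 := by rw [← hχ, Limits.zero_comp]
      have eX : (X⟦(-1 : ℤ)⟧)⟦k + 1⟧ ≅ X⟦k⟧ := (shiftFunctorAdd' C (-1) (k + 1) k (by ring)).symm.app X
      exact zh_src_iso eX.symm key2 f
  intro X hXU f
  obtain ⟨i, W, hW, ⟨e⟩⟩ := t.2.2.2.2.2.2 X
  have eW : (W⟦i⟧)⟦-i⟧ ≅ W⟦(0 : ℤ)⟧ := (shiftFunctorAdd' C i (-i) 0 (by ring)).symm.app W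
  have h1 : X⟦-i⟧ ∈ V :=
    mem_V_iso t ((shiftFunctor C (-i)).mapIso e ≪≫ eW ≪≫ (shiftFunctorZero C ℤ).app W) hW
  have eX2 : (X⟦-i⟧)⟦i - (i.toNat : ℤ)⟧ ≅ X⟦-((i.toNat : ℕ) : ℤ)⟧ :=
    (shiftFunctorAdd' C (-i) (i - (i.toNat : ℤ)) (-(i.toNat : ℤ)) (by omega)).symm.app X
  have h2 : X⟦-((i.toNat : ℕ) : ℤ)⟧ ∈ V :=
    mem_V_iso t eX2.symm (shiftV t h1 _ (by omega))
  exact zh_src_unshift0 (aux i.toNat X hXU h2 0 le_rfl) f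

lemma mem_siltAisle_iff {P X : C} :
    X ∈ siltAisle P ↔ ∀ n : ℤ, 0 < n → ∀ f : P ⟶ X⟦n⟧, f = 0 := by
  constructor
  · intro h n hn f
    exact shift_to_van (m := n) rfl (h (-n) (by omega)) f
  · intro h i hi f
    exact van_to_shift (m := -i) (by omega) (h (-i) (by omega)) f

lemma mem_siltCoaisle_iff {P X : C} :
    X ∈ siltCoaisle P ↔ ∀ n : ℤ, n ≤ 0 → ∀ f : P ⟶ X⟦n⟧, f = 0 := by
  constructor
  · intro h n hn f
    exact shift_to_van (m := n) rfl (h (-n) (by omega)) f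
  · intro h i hi f
    exact van_to_shift (m := -i) (by omega) (h (-i) (by omega)) f

lemma silting_mem_aisle {P : C} (hP : ∀ i : ℤ, 0 < i → ∀ f : P ⟶ P⟦i⟧, f = 0) :
    P ∈ siltAisle P :=
  mem_siltAisle_iff.2 hP

lemma heart_shift_mem_coaisle {Q Y : C} (hY : Y ∈ siltHeart Q) {i : ℤ} (hi : i < 0) :
    Y⟦i⟧ ∈ siltCoaisle Q := by
  obtain ⟨-, W, hW, ⟨e⟩⟩ := hY
  intro j hj f
  have eW : (W⟦(1 : ℤ)⟧)⟦i⟧ ≅ W⟦1 + i⟧ := (shiftFunctorAdd' C 1 i (1 + i) rfl).symm.app W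
  have e2 : Y⟦i⟧ ≅ W⟦1 + i⟧ := (shiftFunctor C i).mapIso e ≪≫ eW
  refine zh_tgt_iso e2.symm (fun g => ?_) f
  exact van_to_shift2 (m := 1 + i - j) rfl
    (mem_siltCoaisle_iff.1 hW (1 + i - j) (by omega)) g

lemma shift_mem_aisle_of_order {P Q : C} (hQP : ∀ i : ℤ, 0 < i → ∀ f : Q ⟶ P⟦i⟧, f = 0)
    {n : ℤ} (hn : 0 ≤ n) : P⟦n⟧ ∈ siltAisle Q := by
  intro i hi f
  exact van_to_shift2 (m := n - i) rfl (hQP (n - i) (by omega)) f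

lemma coaisle_mono {P Q : C} (tQ : IsBoundedTStructure (siltAisle Q) (siltCoaisle Q))
    (hQP : ∀ i : ℤ, 0 < i → ∀ f : Q ⟶ P⟦i⟧, f = 0) :
    siltCoaisle Q ⊆ siltCoaisle P := by
  intro Z hZ i hi f
  exact tQ.1 (P⟦i⟧) (shift_mem_aisle_of_order hQP hi) Z hZ f

lemma order_to_heart {P Q : C}
    (tP : IsBoundedTStructure (siltAisle P) (siltCoaisle P))
    (tQ : IsBoundedTStructure (siltAisle Q) (siltCoaisle Q))
    (hQP : ∀ i : ℤ, 0 < i → ∀ f : Q ⟶ P⟦i⟧, f = 0) :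
    ∀ X ∈ siltHeart P, ∀ Y ∈ siltHeart Q, ∀ i : ℤ, i < 0 → ∀ f : X ⟶ Y⟦i⟧, f = 0 := by
  intro X hX Y hY i hi f
  exact tP.1 X hX.1 (Y⟦i⟧) (coaisle_mono tQ hQP (heart_shift_mem_coaisle hY hi)) f

lemma heart_to_order {P Q : C} (hPs : ∀ i : ℤ, 0 < i → ∀ f : P ⟶ P⟦i⟧, f = 0)
    (tP : IsBoundedTStructure (siltAisle P) (siltCoaisle P))
    (tQ : IsBoundedTStructure (siltAisle Q) (siltCoaisle Q))
    (h : ∀ X ∈ siltHeart P, ∀ Y ∈ siltHeart Q, ∀ i : ℤ, i < 0 → ∀ f : X ⟶ Y⟦i⟧, f = 0) :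
    ∀ i : ℤ, 0 < i → ∀ f : Q ⟶ P⟦i⟧, f = 0 := by
  have hPU : P ∈ siltAisle Q := by
    rw [tQ.2.2.2.1]
    intro B hB f
    refine devissage_V tQ P ?_ B hB f
    intro H hHU hHs m hm f'
    refine devissage_U tP (H⟦m⟧) ?_ P (silting_mem_aisle hPs) f'
    intro H' hH'U hH's m' hm' f''
    exact van_to_shift2 (m := m - m') rfl
      (h H' ⟨hH'U, hH's⟩ H ⟨hHU, hHs⟩ (m - m') (by omega)) f''
  intro i hi f
  exact shift_to_van (m := i) rfl (hPU (-i) (by omega)) f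

end SiltingAux



/-- Under the assumption that every silting object `P` of a thick subcategory `𝒰` of `T`
induces a bounded t-structure `T = P[<0]^⊥ ⊥ P[≥0]^⊥`, the map `P ↦ ℋ_P` sending a silting
object to its silting heart is a poset isomorphism from `silt 𝒰` (ordered by
`Q ≥ P ⟺ Hom(Q, P[>0]) = 0`) onto the set of silting hearts (ordered by
`ℋ ≥ ℋ' ⟺ Hom(ℋ', ℋ[<0]) = 0`): it is order-preserving and order-reflecting, and two
silting objects have the same heart exactly when they are equivalent in the silting order. -/
theorem silting_heart_poset_isomorphism (𝒰 : Set C) (h𝒰 : IsThick 𝒰)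
    (hsilt : ∀ P : C, IsSilting 𝒰 P → IsBoundedTStructure (siltAisle P) (siltCoaisle P)) :
    ∀ P Q : C, IsSilting 𝒰 P → IsSilting 𝒰 Q →
      (((∀ i : ℤ, 0 < i → ∀ f : Q ⟶ P⟦i⟧, f = 0) ↔
        (∀ X ∈ siltHeart P, ∀ Y ∈ siltHeart Q, ∀ i : ℤ, i < 0 → ∀ f : X ⟶ Y⟦i⟧, f = 0)) ∧
      (siltHeart P = siltHeart Q ↔
        ((∀ i : ℤ, 0 < i → ∀ f : Q ⟶ P⟦i⟧, f = 0) ∧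
         (∀ i : ℤ, 0 < i → ∀ f : P ⟶ Q⟦i⟧, f = 0)))) := by
  intro P Q hP hQ
  have tP := hsilt P hP
  have tQ := hsilt Q hQ
  constructor
  · exact ⟨order_to_heart tP tQ, heart_to_order hP.1 tP tQ⟩
  · constructor
    · intro hEq
      have selfOrth := order_to_heart tP tP hP.1
      constructor
      · refine heart_to_order hP.1 tP tQ ?_
        intro X hX Y hY i hi f
        exact selfOrth X hX Y (hEq ▸ hY) i hi f
      · refine heart_to_order hQ.1 tQ tP ?_
        intro X hX Y hY i hi f
        exact selfOrth X (hEq ▸ hX) Y hY i hi f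
    · rintro ⟨hQP, hPQ⟩
      have coeq : siltCoaisle P = siltCoaisle Q :=
        subset_antisymm (coaisle_mono tP hPQ) (coaisle_mono tQ hQP)
      have Ueq : siltAisle P = siltAisle Q := by
        rw [tP.2.2.2.1, tQ.2.2.2.1, coeq]
      unfold siltHeart
      rw [Ueq, coeq]
end

section
/- Let T, 𝒰 be as in the silting assumption, and let Q, R be silting objects of 𝒰. Then a silting object P of 𝒰 satisfies Hom(Q, P[>0]) = 0 and Hom(P, R[>0]) = 0 if and only if its silting heart ℋ_P is contained in Q[<0]^⊥ ∩ (R[>0]^⊥). -/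
open CategoryTheory CategoryTheory.Limits CategoryTheory.Pretriangulated

universe v u

variable {C : Type u} [Category.{v} C] [Preadditive C] [HasZeroObject C]
  [HasShift C ℤ] [∀ n : ℤ, (shiftFunctor C n).Additive] [Pretriangulated C]

/-- `X⟦a⟧ ≅ X⟦b⟧⟦c⟧` when `b + c = a`. -/
def shiftIso' (b c a : ℤ) (h : b + c = a) (X : C) : X⟦a⟧ ≅ (X⟦b⟧)⟦c⟧ :=
  (shiftFunctorAdd' C b c a h).app X

lemma forall_hom_shift_iff (X Y : C) (a b c : ℤ) (h : b + c = a) :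
    (∀ f : X⟦a⟧ ⟶ Y⟦c⟧, f = 0) ↔ (∀ g : X⟦b⟧ ⟶ Y, g = 0) := by
  constructor
  · intro H g
    have h0 : (shiftIso' b c a h X).hom ≫ (shiftFunctor C c).map g = 0 := H _
    have h1 : (shiftFunctor C c).map g = 0 := by
      calc (shiftFunctor C c).map g
          = (shiftIso' b c a h X).inv ≫ ((shiftIso' b c a h X).hom ≫ (shiftFunctor C c).map g) := by
            rw [Iso.inv_hom_id_assoc]
        _ = 0 := by rw [h0, Limits.comp_zero]
    exact (shiftFunctor C c).map_injective (by rw [h1, Functor.map_zero])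
  · intro H f
    obtain ⟨g, hg⟩ := (shiftFunctor C c).map_surjective ((shiftIso' b c a h X).inv ≫ f)
    have hg0 : g = 0 := H g
    have h1 : (shiftIso' b c a h X).inv ≫ f = 0 := by
      rw [← hg, hg0, Functor.map_zero]
    calc f = (shiftIso' b c a h X).hom ≫ ((shiftIso' b c a h X).inv ≫ f) := by
          rw [Iso.hom_inv_id_assoc]
      _ = 0 := by rw [h1, Limits.comp_zero]

lemma forall_hom_shift_transpose (X Y : C) (a b : ℤ) (h : a + b = 0) :
    (∀ f : X⟦a⟧ ⟶ Y, f = 0) ↔ (∀ g : X ⟶ Y⟦b⟧, g = 0) := by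
  constructor
  · intro H g
    have h0 : (shiftFunctor C a).map g ≫ (shiftFunctorCompIsoId C b a (by omega)).hom.app Y = 0 :=
      H _
    have h1 : (shiftFunctor C a).map g = 0 := by
      calc (shiftFunctor C a).map g
          = ((shiftFunctor C a).map g ≫ (shiftFunctorCompIsoId C b a (by omega)).hom.app Y) ≫
              (shiftFunctorCompIsoId C b a (by omega)).inv.app Y := by
            rw [Category.assoc, Iso.hom_inv_id_app]
            exact (Category.comp_id _).symm
        _ = 0 := by rw [h0, Limits.zero_comp]
    exact (shiftFunctor C a).map_injective (by rw [h1, Functor.map_zero])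
  · intro H f
    have h0 : (shiftFunctorCompIsoId C a b h).inv.app X ≫ (shiftFunctor C b).map f = 0 := H _
    have h1 : (shiftFunctor C b).map f = 0 := by
      calc (shiftFunctor C b).map f
          = (shiftFunctorCompIsoId C a b h).hom.app X ≫
              ((shiftFunctorCompIsoId C a b h).inv.app X ≫ (shiftFunctor C b).map f) := by
            rw [Iso.hom_inv_id_app_assoc]
        _ = 0 := by rw [h0, Limits.comp_zero]
    exact (shiftFunctor C b).map_injective (by rw [h1, Functor.map_zero])

variable {U V : Set C}

lemma ts_U_iso (hT : IsBoundedTStructure U V) {X Y : C} (e : X ≅ Y) (hX : X ∈ U) : Y ∈ U := by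
  obtain ⟨-, -, -, hUeq, -⟩ := hT
  rw [hUeq] at hX ⊢
  intro B hB f
  have h0 := hX B hB (e.hom ≫ f)
  calc f = e.inv ≫ (e.hom ≫ f) := by rw [Iso.inv_hom_id_assoc]
    _ = 0 := by rw [h0, Limits.comp_zero]

lemma ts_V_iso (hT : IsBoundedTStructure U V) {X Y : C} (e : X ≅ Y) (hX : X ∈ V) : Y ∈ V := by
  obtain ⟨-, -, hVeq, -⟩ := hT
  rw [hVeq] at hX ⊢
  intro A hA f
  have h0 := hX A hA (f ≫ e.inv)
  calc f = (f ≫ e.inv) ≫ e.hom := by rw [Category.assoc, Iso.inv_hom_id, Category.comp_id]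
    _ = 0 := by rw [h0, Limits.zero_comp]

lemma ts_U_shift (hT : IsBoundedTStructure U V) {X : C} (hX : X ∈ U) :
    ∀ d : ℤ, 0 ≤ d → X⟦d⟧ ∈ U := by
  intro d hd
  refine Int.le_induction (motive := fun d _ => X⟦d⟧ ∈ U) ?_ ?_ d hd
  · exact ts_U_iso hT ((shiftFunctorZero C ℤ).app X).symm hX
  · intro n hn ih
    exact ts_U_iso hT (shiftIso' n 1 (n + 1) rfl X).symm (hT.2.2.2.2.1 _ ih)

lemma ts_V_shift (hT : IsBoundedTStructure U V) {Y : C} (hY : Y ∈ V) :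
    ∀ d : ℤ, d ≤ 0 → Y⟦d⟧ ∈ V := by
  have one : ∀ Z : C, Z ∈ V → Z⟦(-1 : ℤ)⟧ ∈ V := by
    intro Z hZ
    rw [hT.2.2.1]
    intro A hA
    refine (forall_hom_shift_transpose A Z 1 (-1) (by omega)).mp ?_
    intro f
    exact hT.1 _ (hT.2.2.2.2.1 _ hA) _ hZ f
  intro d hd
  have key : ∀ m : ℤ, 0 ≤ m → Y⟦-m⟧ ∈ V := by
    intro m hm
    refine Int.le_induction (motive := fun m _ => Y⟦-m⟧ ∈ V) ?_ ?_ m hm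
    · show Y⟦(-0 : ℤ)⟧ ∈ V
      have h00 : Y⟦(-0 : ℤ)⟧ = Y⟦(0 : ℤ)⟧ := by norm_num
      rw [h00]
      exact ts_V_iso hT ((shiftFunctorZero C ℤ).app Y).symm hY
    · intro n hn ih
      exact ts_V_iso hT (shiftIso' (-n) (-1) (-(n + 1)) (by ring) Y).symm (one _ ih)
  have : Y⟦d⟧ = Y⟦-(-d)⟧ := by norm_num
  rw [this]
  exact key (-d) (by omega)

lemma ts_orth_shift (hT : IsBoundedTStructure U V) {W Y : C} (hW : W ∈ U) (hY : Y ∈ V)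
    (j c : ℤ) (hcj : c ≤ j) : ∀ φ : W⟦j⟧ ⟶ Y⟦c⟧, φ = 0 :=
  (forall_hom_shift_iff W Y j (j - c) c (by ring)).mpr
    (fun g => hT.1 _ (ts_U_shift hT hW (j - c) (by omega)) _ hY g)

lemma ts_mem_shiftSet_zero {S : Set C} {X : C} (hX : X ∈ S) : X ∈ shiftSet S 0 :=
  ⟨X, hX, ⟨((shiftFunctorZero C ℤ).app X).symm⟩⟩

lemma ts_orth_shiftSetV (hT : IsBoundedTStructure U V) {W X : C} (hW : W ∈ U) {m : ℤ}
    (hX : X ∈ shiftSet V m) (j : ℤ) (hmj : m ≤ j) : ∀ φ : W⟦j⟧ ⟶ X, φ = 0 := by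
  obtain ⟨Y, hY, ⟨e⟩⟩ := hX
  intro φ
  have h0 : φ ≫ e.hom = 0 := ts_orth_shift hT hW hY j m hmj _
  calc φ = (φ ≫ e.hom) ≫ e.inv := by rw [Category.assoc, Iso.hom_inv_id, Category.comp_id]
    _ = 0 := by rw [h0, Limits.zero_comp]

lemma ts_orth_shiftSetU (hT : IsBoundedTStructure U V) {X Z : C} {n : ℤ}
    (hX : X ∈ shiftSet U n) (hZ : Z ∈ V) (c d : ℤ) (hd : d ≤ n + c) :
    ∀ φ : X⟦c⟧ ⟶ Z⟦d⟧, φ = 0 := by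
  obtain ⟨A, hA, ⟨e⟩⟩ := hX
  intro φ
  have h0 : (shiftIso' n c (n + c) rfl A).hom ≫ (shiftFunctor C c).map e.inv ≫ φ = 0 :=
    ts_orth_shift hT hA hZ (n + c) d hd _
  have h1 : (shiftFunctor C c).map e.inv ≫ φ = 0 := by
    calc (shiftFunctor C c).map e.inv ≫ φ
        = (shiftIso' n c (n + c) rfl A).inv ≫
            ((shiftIso' n c (n + c) rfl A).hom ≫ (shiftFunctor C c).map e.inv ≫ φ) := by
          rw [Iso.inv_hom_id_assoc]
      _ = 0 := by rw [h0, Limits.comp_zero]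
  calc φ = (shiftFunctor C c).map e.hom ≫ ((shiftFunctor C c).map e.inv ≫ φ) := by
        rw [← Category.assoc, ← Functor.map_comp, Iso.hom_inv_id, CategoryTheory.Functor.map_id, Category.id_comp]
    _ = 0 := by rw [h1, Limits.comp_zero]

lemma ts_mem_shiftSetV_of_perp (hT : IsBoundedTStructure U V) {X : C} (m : ℤ)
    (h : ∀ W ∈ U, ∀ f : W⟦m⟧ ⟶ X, f = 0) : X ∈ shiftSet V m := by
  refine ⟨X⟦-m⟧, ?_, ⟨((shiftFunctorCompIsoId C (-m) m (by omega)).app X).symm⟩⟩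
  rw [hT.2.2.1]
  intro A hA
  exact (forall_hom_shift_transpose A X m (-m) (by omega)).mp (h A hA)

lemma ts_isZero (hT : IsBoundedTStructure U V) {X : C} (hX : X ∈ U) {m : ℤ} (hm : m ≤ 0)
    (h : X ∈ shiftSet V m) : IsZero X := by
  obtain ⟨Y, hY, ⟨e⟩⟩ := h
  have h0 : e.hom = 0 := hT.1 X hX _ (ts_V_shift hT hY m hm) e.hom
  rw [IsZero.iff_id_eq_zero]
  calc 𝟙 X = e.hom ≫ e.inv := (Iso.hom_inv_id e).symm
    _ = 0 := by rw [h0, Limits.zero_comp]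

lemma ts_mem_shift_heart (hT : IsBoundedTStructure U V) {X : C} (n : ℤ)
    (h1 : X ∈ shiftSet U n) (h2 : X ∈ shiftSet V (n + 1)) :
    X ∈ shiftSet (U ∩ shiftSet V 1) n := by
  obtain ⟨A, hA, ⟨e1⟩⟩ := h1
  obtain ⟨Y, hY, ⟨e2⟩⟩ := h2
  have E : A⟦n⟧ ≅ (Y⟦(1 : ℤ)⟧)⟦n⟧ := e1.symm.trans (e2.trans (shiftIso' 1 n (n + 1) (by ring) Y))
  exact ⟨A, ⟨hA, ⟨Y, hY, ⟨(shiftFunctor C n).preimageIso E⟩⟩⟩, ⟨e1⟩⟩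


lemma ts_filtration (hT : IsBoundedTStructure U V) (S : Set C)
    (hiso : ∀ X Y : C, (X ≅ Y) → X ∈ S → Y ∈ S)
    (hext : ∀ T ∈ distTriang C, T.obj₁ ∈ S → T.obj₃ ∈ S → T.obj₂ ∈ S) :
    ∀ k : ℤ, 0 ≤ k → ∀ n : ℤ,
      (∀ j : ℤ, n ≤ j → j ≤ n + k → ∀ X, X ∈ shiftSet (U ∩ shiftSet V 1) j → X ∈ S) →
      ∀ X, X ∈ shiftSet U n → X ∈ shiftSet V (n + k + 1) → X ∈ S := by
  intro k hk
  refine Int.le_induction (motive := fun k _ => ∀ n : ℤ,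
      (∀ j : ℤ, n ≤ j → j ≤ n + k → ∀ X, X ∈ shiftSet (U ∩ shiftSet V 1) j → X ∈ S) →
      ∀ X, X ∈ shiftSet U n → X ∈ shiftSet V (n + k + 1) → X ∈ S) ?_ ?_ k hk
  · intro n hh X hXU hXV
    have e0 : n + 0 + 1 = n + 1 := by ring
    rw [e0] at hXV
    exact hh n le_rfl (by omega) X (ts_mem_shift_heart hT n hXU hXV)
  · intro k hk ih n hh X hXU hXV
    have e0 : n + (k + 1) + 1 = n + 1 + k + 1 := by ring
    rw [e0] at hXV
    obtain ⟨A, B, hA, hB, f, g, h, hTri⟩ := hT.2.1 (X⟦(-(n + 1) : ℤ)⟧)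
    have hTri' := Pretriangulated.Triangle.shift_distinguished (Triangle.mk f g h) hTri (n + 1)
    have eX : (X⟦(-(n + 1) : ℤ)⟧)⟦(n + 1 : ℤ)⟧ ≅ X :=
      (shiftFunctorCompIsoId C (-(n + 1)) (n + 1) (by omega)).app X
    -- B⟦1⟧ lies in the aisle
    have hB1 : B⟦(1 : ℤ)⟧ ∈ U := by
      rw [hT.2.2.2.1]
      intro Z hZ
      refine (forall_hom_shift_transpose B Z 1 (-1) (by omega)).mpr ?_
      intro ψ
      have hrot := rot_of_distTriang _ hTri
      have hcomp : (Triangle.mk f g h).rotate.mor₁ ≫ ψ = 0 :=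
        ts_orth_shiftSetU hT hXU hZ (-(n + 1)) (-1) (by omega) _
      obtain ⟨χ, hχ⟩ := Pretriangulated.Triangle.yoneda_exact₂ _ hrot ψ hcomp
      have hχ0 : χ = 0 := ts_orth_shift hT hA hZ 1 (-1) (by omega) χ
      rw [hχ, hχ0, Limits.comp_zero]
      rfl
    -- B⟦n+1⟧ is a shifted heart object, hence in S
    have hBS : B⟦(n + 1 : ℤ)⟧ ∈ S := by
      have h1 : B⟦(n + 1 : ℤ)⟧ ∈ shiftSet U n :=
        ⟨B⟦(1 : ℤ)⟧, hB1, ⟨shiftIso' 1 n (n + 1) (by ring) B⟩⟩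
      have h2 : B⟦(n + 1 : ℤ)⟧ ∈ shiftSet V (n + 1) := ⟨B, hB, ⟨Iso.refl _⟩⟩
      exact hh n le_rfl (by omega) _ (ts_mem_shift_heart hT n h1 h2)
    -- A⟦n+1⟧ lies in shiftSet V (n+1+k+1)
    have hAV : A⟦(n + 1 : ℤ)⟧ ∈ shiftSet V (n + 1 + k + 1) := by
      apply ts_mem_shiftSetV_of_perp hT
      intro W hW φ
      have hinv := inv_rot_of_distTriang _ hTri'
      have hcomp : φ ≫ (((CategoryTheory.shiftFunctor (Triangle C)
          (n + 1)).obj (Triangle.mk f g h)).invRotate).mor₂ = 0 := by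
        have hz : ∀ ξ : W⟦(n + 1 + k + 1 : ℤ)⟧ ⟶ (X⟦(-(n + 1) : ℤ)⟧)⟦(n + 1 : ℤ)⟧, ξ = 0 := by
          intro ξ
          have h0 : ξ ≫ eX.hom = 0 := ts_orth_shiftSetV hT hW hXV (n + 1 + k + 1) le_rfl _
          calc ξ = (ξ ≫ eX.hom) ≫ eX.inv := by
                rw [Category.assoc, Iso.hom_inv_id, Category.comp_id]
            _ = 0 := by rw [h0, Limits.zero_comp]
        exact hz _
      obtain ⟨ψ, hψ⟩ := Pretriangulated.Triangle.coyoneda_exact₂ _ hinv φ hcomp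
      have hψ0 : ψ = 0 := by
        have h2 : ψ ≫ (shiftIso' (n + 1) (-1) n (by ring) B).symm.hom = 0 :=
          ts_orth_shift hT hW hB (n + 1 + k + 1) n (by omega) _
        exact ((Category.comp_id ψ).symm.trans ((congrArg (ψ ≫ ·)
                (shiftIso' (n + 1) (-1) n (by ring) B).symm.hom_inv_id).symm.trans
                (Category.assoc _ _ _).symm)).trans
          ((congrArg (· ≫ (shiftIso' (n + 1) (-1) n (by ring) B).symm.inv) h2).trans
            Limits.zero_comp)
      rw [hψ, hψ0, Limits.zero_comp]
      rfl
    have hAS : A⟦(n + 1 : ℤ)⟧ ∈ S :=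
      ih (n + 1) (fun j hj1 hj2 => hh j (by omega) (by omega)) _
        ⟨A, hA, ⟨Iso.refl _⟩⟩ hAV
    have hmid : (X⟦(-(n + 1) : ℤ)⟧)⟦(n + 1 : ℤ)⟧ ∈ S := hext _ hTri' hAS hBS
    exact hiso _ _ eX hmid

lemma ts_aisle_subset (hT : IsBoundedTStructure U V) (S : Set C)
    (hiso : ∀ X Y : C, (X ≅ Y) → X ∈ S → Y ∈ S)
    (hext : ∀ T ∈ distTriang C, T.obj₁ ∈ S → T.obj₃ ∈ S → T.obj₂ ∈ S)
    (hheart : ∀ j : ℤ, 0 ≤ j → ∀ X, X ∈ shiftSet (U ∩ shiftSet V 1) j → X ∈ S)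
    (hzero : ∀ X : C, IsZero X → X ∈ S) : U ⊆ S := by
  intro X hX
  obtain ⟨i, hi⟩ := hT.2.2.2.2.2.2 X
  by_cases hipos : 1 ≤ i
  · refine ts_filtration hT S hiso hext (i - 1) (by omega) 0
      (fun j h1 h2 X' hX' => hheart j (by omega) X' hX') X (ts_mem_shiftSet_zero hX) ?_
    have e0 : (0 : ℤ) + (i - 1) + 1 = i := by ring
    rw [e0]
    exact hi
  · exact hzero X (ts_isZero hT hX (by omega) hi)

lemma ts_coaisle_subset (hT : IsBoundedTStructure U V) (S : Set C)
    (hiso : ∀ X Y : C, (X ≅ Y) → X ∈ S → Y ∈ S)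
    (hext : ∀ T ∈ distTriang C, T.obj₁ ∈ S → T.obj₃ ∈ S → T.obj₂ ∈ S)
    (hheart : ∀ j : ℤ, j ≤ -1 → ∀ X, X ∈ shiftSet (U ∩ shiftSet V 1) j → X ∈ S)
    (hzero : ∀ X : C, IsZero X → X ∈ S) : V ⊆ S := by
  intro X hX
  obtain ⟨i, hi⟩ := hT.2.2.2.2.2.1 X
  by_cases hineg : i ≤ -1
  · refine ts_filtration hT S hiso hext (-1 - i) (by omega) i
      (fun j h1 h2 X' hX' => hheart j (by omega) X' hX') X hi ?_
    have e0 : i + (-1 - i) + 1 = 0 := by ring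
    rw [e0]
    exact ts_mem_shiftSet_zero hX
  · obtain ⟨A, hA, ⟨e⟩⟩ := hi
    have hXU : X ∈ U := ts_U_iso hT e.symm (ts_U_shift hT hA i (by omega))
    exact hzero X (ts_isZero hT hXU (le_refl 0) (ts_mem_shiftSet_zero hX))

/-- Let `𝒰` be a thick subcategory of a triangulated category `T` such that every silting
object of `𝒰` induces a bounded silting t-structure, and let `Q, R` be silting objects
of `𝒰`. A silting object `P` of `𝒰` satisfies `Hom(Q, P[>0]) = 0` and `Hom(P, R[>0]) = 0`
(that is, `Q ≥ P ≥ R`) if and only if its silting heart `ℋ_P` is contained in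
`Q[<0]^⊥ ∩ R[>0]^⊥`. -/
theorem silting_between_iff_heart_subset (𝒰 : Set C) (h𝒰 : IsThick 𝒰)
    (hsilt : ∀ P : C, IsSilting 𝒰 P → IsBoundedTStructure (siltAisle P) (siltCoaisle P))
    (Q R : C) (hQ : IsSilting 𝒰 Q) (hR : IsSilting 𝒰 R) :
    ∀ P : C, IsSilting 𝒰 P →
      (((∀ i : ℤ, 0 < i → ∀ f : Q ⟶ P⟦i⟧, f = 0) ∧
        (∀ i : ℤ, 0 < i → ∀ f : P ⟶ R⟦i⟧, f = 0)) ↔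
        siltHeart P ⊆
          {X : C | ∀ i : ℤ, i < 0 → ∀ f : Q⟦i⟧ ⟶ X, f = 0} ∩
          {X : C | ∀ i : ℤ, 0 < i → ∀ f : R⟦i⟧ ⟶ X, f = 0}) := by
  intro P hP
  have hTP := hsilt P hP
  have hTQ := hsilt Q hQ
  have hTR := hsilt R hR
  have hPUP : P ∈ siltAisle P := fun i hi =>
    (forall_hom_shift_transpose P P i (-i) (by omega)).mpr (fun g => hP.1 (-i) (by omega) g)
  have hRUR : R ∈ siltAisle R := fun j hj =>
    (forall_hom_shift_transpose R R j (-j) (by omega)).mpr (fun g => hR.1 (-j) (by omega) g)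
  constructor
  · rintro ⟨hQP, hPR⟩ X hX
    obtain ⟨hX1, hX2⟩ := hX
    constructor
    · have hPUQ : P ∈ siltAisle Q := fun i hi =>
        (forall_hom_shift_transpose Q P i (-i) (by omega)).mpr (fun g => hQP (-i) (by omega) g)
      have hVQP : siltCoaisle Q ⊆ siltCoaisle P := by
        intro B hB i hi f
        exact hTQ.1 _ (ts_U_shift hTQ hPUQ i hi) _ hB f
      show X ∈ siltAisle Q
      rw [hTQ.2.2.2.1]
      intro Z hZ φ
      exact hTP.1 X hX1 Z (hVQP hZ) φ
    · intro i hi f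
      have hRUP : R ∈ siltAisle P := fun j hj =>
        (forall_hom_shift_transpose P R j (-j) (by omega)).mpr (fun g => hPR (-j) (by omega) g)
      exact ts_orth_shiftSetV hTP hRUP hX2 i (by omega) f
  · intro hsub
    constructor
    · -- Q ≥ P
      have hPS : P ∈ siltAisle Q := by
        refine ts_aisle_subset hTP (siltAisle Q) ?_ ?_ ?_ ?_ hPUP
        · intro X Y e hX i hi f
          have h0 : f ≫ e.inv = 0 := hX i hi _
          calc f = (f ≫ e.inv) ≫ e.hom := by
                rw [Category.assoc, Iso.inv_hom_id, Category.comp_id]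
            _ = 0 := by rw [h0, Limits.zero_comp]
        · intro T hT h1 h3 i hi f
          have h0 : f ≫ T.mor₂ = 0 := h3 i hi _
          obtain ⟨g, hg⟩ := Pretriangulated.Triangle.coyoneda_exact₂ T hT f h0
          rw [hg, h1 i hi g, Limits.zero_comp]
        · intro j hj X hX
          obtain ⟨H, hH, ⟨e⟩⟩ := hX
          have hHS : H ∈ siltAisle Q := (hsub hH).1
          intro i hi f
          have hz : ∀ f' : Q⟦i⟧ ⟶ H⟦j⟧, f' = 0 :=
            (forall_hom_shift_iff Q H i (i - j) j (by ring)).mpr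
              (fun g => hHS (i - j) (by omega) g)
          have h0 : f ≫ e.hom = 0 := hz _
          calc f = (f ≫ e.hom) ≫ e.inv := by
                rw [Category.assoc, Iso.hom_inv_id, Category.comp_id]
            _ = 0 := by rw [h0, Limits.zero_comp]
        · intro X h0 i hi f
          exact h0.eq_of_tgt f 0
      intro i hi f
      exact (forall_hom_shift_transpose Q P (-i) i (by omega)).mp
        (hPS (-i) (by omega)) f
    · -- P ≥ R
      have hVPR : siltCoaisle P ⊆ siltCoaisle R := by
        refine ts_coaisle_subset hTP (siltCoaisle R) ?_ ?_ ?_ ?_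
        · intro X Y e hX i hi f
          have h0 : f ≫ e.inv = 0 := hX i hi _
          calc f = (f ≫ e.inv) ≫ e.hom := by
                rw [Category.assoc, Iso.inv_hom_id, Category.comp_id]
            _ = 0 := by rw [h0, Limits.zero_comp]
        · intro T hT h1 h3 i hi f
          have h0 : f ≫ T.mor₂ = 0 := h3 i hi _
          obtain ⟨g, hg⟩ := Pretriangulated.Triangle.coyoneda_exact₂ T hT f h0
          rw [hg, h1 i hi g, Limits.zero_comp]
        · intro j hj X hX
          obtain ⟨H, hH, ⟨e⟩⟩ := hX
          have hHS : ∀ i : ℤ, 0 < i → ∀ f : R⟦i⟧ ⟶ H, f = 0 := (hsub hH).2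
          intro i hi f
          have hz : ∀ f' : R⟦i⟧ ⟶ H⟦j⟧, f' = 0 :=
            (forall_hom_shift_iff R H i (i - j) j (by ring)).mpr
              (fun g => hHS (i - j) (by omega) g)
          have h0 : f ≫ e.hom = 0 := hz _
          calc f = (f ≫ e.hom) ≫ e.inv := by
                rw [Category.assoc, Iso.hom_inv_id, Category.comp_id]
            _ = 0 := by rw [h0, Limits.zero_comp]
        · intro X h0 i hi f
          exact h0.eq_of_tgt f 0
      have hRUP : R ∈ siltAisle P := by
        rw [hTP.2.2.2.1]
        intro Z hZ φ
        exact hTR.1 R hRUR Z (hVPR hZ) φ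
      intro i hi f
      exact (forall_hom_shift_transpose P R (-i) i (by omega)).mp
        (hRUP (-i) (by omega)) f
end

section
/- Let H be a hereditary finite-dimensional algebra, D = D^b(mod H), d ≥ 1, and let S, T be simple-minded collections of D with associated t-structures (D_S^{≤0}, D_S^{≥1}) and (D_T^{≤0}, D_T^{≥1}) and hearts ℋ_S = Filt(S), ℋ_T = Filt(T). Then the following are equivalent: (1) ℋ_S ⊆ D_T^{≤0} ∩ ν D_T^{≥1−d}; (2) ℋ_T ⊆ ν^{−1} D_S^{≤d−1} ∩ D_S^{≥0}; (3) D_S^{≤0} ⊆ D_T^{≤0} and D_S^{≥0} ⊆ ν D_T^{≥1−d}; (4) D_T^{≤0} ⊆ ν^{−1} D_S^{≤d−1} and D_T^{≥0} ⊆ D_S^{≥0}. -/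
open CategoryTheory CategoryTheory.Limits CategoryTheory.Pretriangulated

universe v u

variable {C : Type u} [Category.{v} C] [Preadditive C] [HasZeroObject C]
  [HasShift C ℤ] [∀ n : ℤ, (shiftFunctor C n).Additive] [Pretriangulated C]

/-- A class of objects is "Filt-closed" if it contains the zero objects and is closed
under isomorphisms and extensions. -/
def IsFiltClosed (P : Set C) : Prop :=
  (∀ X : C, Limits.IsZero X → X ∈ P) ∧
  (∀ X Y : C, (X ≅ Y) → X ∈ P → Y ∈ P) ∧
  (∀ T ∈ distTriang C, T.obj₁ ∈ P → T.obj₃ ∈ P → T.obj₂ ∈ P)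

/-- `Filt S`: the smallest extension-closed strictly full subcategory containing `S`. -/
def Filt (S : Set C) : Set C :=
  ⋂₀ {P : Set C | S ⊆ P ∧ IsFiltClosed P}

/-- A simple-minded collection (SMC) in a triangulated category: each object has a
division ring of endomorphisms, distinct objects have no morphisms between them,
`Hom(X[i], Y) = 0` for `i > 0`, and `S` generates the category as a thick subcategory. -/
def IsSMC (S : Set C) : Prop :=
  (∀ X ∈ S, ¬ Limits.IsZero X ∧ ∀ f : X ⟶ X, f ≠ 0 → IsIso f) ∧
  (∀ X ∈ S, ∀ Y ∈ S, X ≠ Y → ∀ f : X ⟶ Y, f = 0) ∧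
  (∀ X ∈ S, ∀ Y ∈ S, ∀ i : ℤ, 0 < i → ∀ f : X⟦i⟧ ⟶ Y, f = 0) ∧
  thickClosure S = Set.univ

/-- `D_S^{≤ n} = Filt(S[i] : i ≥ -n)`, the aisle of the t-structure associated to
the simple-minded collection `S`. -/
def DSle (S : Set C) (n : ℤ) : Set C :=
  Filt {X : C | ∃ Y ∈ S, ∃ i : ℤ, -n ≤ i ∧ Nonempty (X ≅ Y⟦i⟧)}

/-- `D_S^{≥ n} = Filt(S[i] : i ≤ -n)`, the coaisle of the t-structure associated to
the simple-minded collection `S`. -/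
def DSge (S : Set C) (n : ℤ) : Set C :=
  Filt {X : C | ∃ Y ∈ S, ∃ i : ℤ, i ≤ -n ∧ Nonempty (X ≅ Y⟦i⟧)}

/-- The essential image of a class of objects under a functor. -/
def imageSet (F : C ⥤ C) (S : Set C) : Set C :=
  {X : C | ∃ Y ∈ S, Nonempty (X ≅ F.obj Y)}

section Aux

variable {C : Type u} [Category.{v} C] [Preadditive C] [HasZeroObject C]
  [HasShift C ℤ] [∀ n : ℤ, (shiftFunctor C n).Additive] [Pretriangulated C]

lemma subset_filt (S : Set C) : S ⊆ Filt S :=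
  fun _ hX => Set.mem_sInter.2 fun _ hP => hP.1 hX

lemma filt_subset {S P : Set C} (h1 : S ⊆ P) (h2 : IsFiltClosed P) : Filt S ⊆ P :=
  fun _ hX => Set.mem_sInter.1 hX P ⟨h1, h2⟩

lemma isFiltClosed_filt (S : Set C) : IsFiltClosed (Filt S) :=
  ⟨fun X hX => Set.mem_sInter.2 fun _ hP => hP.2.1 X hX,
   fun X Y e hX => Set.mem_sInter.2 fun P hP =>
     hP.2.2.1 X Y e (Set.mem_sInter.1 hX P hP),
   fun T hT h1 h3 => Set.mem_sInter.2 fun P hP =>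
     hP.2.2.2 T hT (Set.mem_sInter.1 h1 P hP) (Set.mem_sInter.1 h3 P hP)⟩

lemma map_isZero_triang (F : C ⥤ C) [F.CommShift ℤ] [F.IsTriangulated] {X : C}
    (hX : IsZero X) : IsZero (F.obj X) := by
  rw [IsZero.iff_id_eq_zero] at hX ⊢
  rw [← CategoryTheory.Functor.map_id F, hX, F.map_zero]

lemma isZero_inverse (ν : C ≌ C) [ν.functor.CommShift ℤ] [ν.functor.IsTriangulated] {X : C}
    (hX : IsZero X) : IsZero (ν.inverse.obj X) := by
  have h : IsZero (ν.functor.obj (ν.inverse.obj X)) := hX.of_iso (ν.counitIso.app X)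
  rw [IsZero.iff_id_eq_zero]
  apply ν.functor.map_injective
  rw [CategoryTheory.Functor.map_id, ν.functor.map_zero]
  exact (IsZero.iff_id_eq_zero _).1 h

lemma isFiltClosed_preimage (F : C ⥤ C) [F.CommShift ℤ] [F.IsTriangulated] {P : Set C}
    (hP : IsFiltClosed P) : IsFiltClosed {X : C | F.obj X ∈ P} := by
  refine ⟨fun X hX => hP.1 _ (map_isZero_triang F hX),
    fun X Y e hX => hP.2.1 _ _ (F.mapIso e) hX, ?_⟩
  intro T hT h1 h3
  exact hP.2.2 _ (F.map_distinguished T hT) h1 h3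

lemma isFiltClosed_shift_preimage (n : ℤ) {P : Set C} (hP : IsFiltClosed P) :
    IsFiltClosed {X : C | X⟦n⟧ ∈ P} := by
  refine ⟨fun X hX => hP.1 _ ?_,
    fun X Y e hX => hP.2.1 _ _ ((shiftFunctor C n).mapIso e) hX, ?_⟩
  · rw [IsZero.iff_id_eq_zero] at hX ⊢
    rw [← CategoryTheory.Functor.map_id (shiftFunctor C n), hX, (shiftFunctor C n).map_zero]
  · intro T hT h1 h3
    exact hP.2.2 _ (Triangle.shift_distinguished T hT n) h1 h3

lemma isFiltClosed_preimage_inv (ν : C ≌ C) [ν.functor.CommShift ℤ]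
    [ν.functor.IsTriangulated] {P : Set C} (hP : IsFiltClosed P) :
    IsFiltClosed {X : C | ν.inverse.obj X ∈ P} := by
  refine ⟨fun X hX => hP.1 _ (isZero_inverse ν hX),
    fun X Y e hX => hP.2.1 _ _ (ν.inverse.mapIso e) hX, ?_⟩
  intro T hT h1 h3
  obtain ⟨Z, v, w, hZ⟩ := distinguished_cocone_triangle (ν.inverse.map T.mor₁)
  have hmap := ν.functor.map_distinguished _ hZ
  have comm : (ν.functor.mapTriangle.obj (Triangle.mk (ν.inverse.map T.mor₁) v w)).mor₁ ≫
      ν.counit.app T.obj₂ = ν.counit.app T.obj₁ ≫ T.mor₁ := by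
    exact ν.counit.naturality T.mor₁
  obtain ⟨c, hc₁, hc₂⟩ := complete_distinguished_triangle_morphism _ _ hmap hT
    (ν.counit.app T.obj₁) (ν.counit.app T.obj₂) comm
  let φ : ν.functor.mapTriangle.obj (Triangle.mk (ν.inverse.map T.mor₁) v w) ⟶ T :=
    { hom₁ := ν.counit.app T.obj₁
      hom₂ := ν.counit.app T.obj₂
      hom₃ := c
      comm₁ := comm
      comm₂ := hc₁
      comm₃ := hc₂ }
  have hiso : IsIso φ.hom₃ := by
    apply isIso₃_of_isIso₁₂ φ hmap hT
    · dsimp [φ]; exact Iso.isIso_hom (ν.counitIso.app _)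
    · dsimp [φ]; exact Iso.isIso_hom (ν.counitIso.app _)
  have eZ : ν.functor.obj Z ≅ T.obj₃ := @asIso _ _ _ _ c hiso
  have hZP : Z ∈ P := hP.2.1 _ _ (ν.inverse.mapIso eZ.symm ≪≫ (ν.unitIso.app Z).symm) h3
  exact hP.2.2 _ hZ h1 hZP

lemma homzero_of_iso {A B A' B' : C} (e : A' ≅ A) (e' : B ≅ B')
    (h : ∀ f : A ⟶ B, f = 0) : ∀ f : A' ⟶ B', f = 0 := by
  intro f
  have hg := h (e.inv ≫ f ≫ e'.inv)
  calc f = e.hom ≫ (e.inv ≫ f ≫ e'.inv) ≫ e'.hom := by simp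
    _ = 0 := by rw [hg]; simp

lemma homzero_shift {A B : C} (n : ℤ) :
    (∀ f : A ⟶ B, f = 0) ↔ (∀ f : A⟦n⟧ ⟶ B⟦n⟧, f = 0) := by
  constructor
  · intro h f
    obtain ⟨g, rfl⟩ := (shiftFunctor C n).map_surjective f
    rw [h g, (shiftFunctor C n).map_zero]
  · intro h f
    apply (shiftFunctor C n).map_injective
    rw [h ((shiftFunctor C n).map f), (shiftFunctor C n).map_zero]

lemma homzero_equiv (ν : C ≌ C) [ν.functor.CommShift ℤ] [ν.functor.IsTriangulated] {A B : C} :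
    (∀ f : A ⟶ ν.inverse.obj B, f = 0) ↔ (∀ g : ν.functor.obj A ⟶ B, g = 0) := by
  constructor
  · intro h g
    have h1 : ν.unit.app A ≫ ν.inverse.map g = 0 := h _
    have h2 : ν.inverse.map g = 0 := by
      have := congrArg (fun t => ν.unitIso.inv.app A ≫ t) h1
      simpa using this
    have h3 : ν.functor.map (ν.inverse.map g) = 0 := by rw [h2, ν.functor.map_zero]
    have h4 := ν.counit.naturality g
    simp only [Functor.comp_map, h3, zero_comp, Functor.id_map] at h4
    calc g = ν.counitIso.inv.app _ ≫ (ν.counit.app _ ≫ g) := by simp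
      _ = 0 := by rw [← h4]; simp
  · intro h f
    apply ν.functor.map_injective
    rw [ν.functor.map_zero]
    have h1 : ν.functor.map f ≫ ν.counit.app B = 0 := h _
    calc ν.functor.map f = (ν.functor.map f ≫ ν.counit.app B) ≫ ν.counitIso.inv.app B := by
          simp
      _ = 0 := by rw [h1, zero_comp]

lemma DSle_shift {S : Set C} {a : ℤ} (k : ℤ) {X : C} (hX : X ∈ DSle S a) :
    X⟦k⟧ ∈ DSle S (a - k) := by
  have hsub : DSle S a ⊆ {X : C | X⟦k⟧ ∈ DSle S (a - k)} := by
    apply filt_subset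
    · rintro X ⟨Y, hY, i, hi, ⟨e⟩⟩
      apply subset_filt
      exact ⟨Y, hY, i + k, by omega,
        ⟨(shiftFunctor C k).mapIso e ≪≫ ((shiftFunctorAdd C i k).app Y).symm⟩⟩
    · exact isFiltClosed_shift_preimage k (isFiltClosed_filt _)
  exact hsub hX

lemma DSge_shift {S : Set C} {a : ℤ} (k : ℤ) {X : C} (hX : X ∈ DSge S a) :
    X⟦k⟧ ∈ DSge S (a - k) := by
  have hsub : DSge S a ⊆ {X : C | X⟦k⟧ ∈ DSge S (a - k)} := by
    apply filt_subset
    · rintro X ⟨Y, hY, i, hi, ⟨e⟩⟩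
      apply subset_filt
      exact ⟨Y, hY, i + k, by omega,
        ⟨(shiftFunctor C k).mapIso e ≪≫ ((shiftFunctorAdd C i k).app Y).symm⟩⟩
    · exact isFiltClosed_shift_preimage k (isFiltClosed_filt _)
  exact hsub hX

lemma DSle_shift_iff {S : Set C} {a : ℤ} (k : ℤ) {X : C} :
    X ∈ DSle S a ↔ X⟦k⟧ ∈ DSle S (a - k) := by
  constructor
  · exact DSle_shift k
  · intro h
    have h2 := DSle_shift (-k) h
    have e : a - k - -k = a := by ring
    rw [e] at h2
    exact (isFiltClosed_filt _).2.1 _ _ (shiftShiftNeg X k) h2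

lemma DSge_shift_iff {S : Set C} {a : ℤ} (k : ℤ) {X : C} :
    X ∈ DSge S a ↔ X⟦k⟧ ∈ DSge S (a - k) := by
  constructor
  · exact DSge_shift k
  · intro h
    have h2 := DSge_shift (-k) h
    have e : a - k - -k = a := by ring
    rw [e] at h2
    exact (isFiltClosed_filt _).2.1 _ _ (shiftShiftNeg X k) h2

lemma DSle_mono {S : Set C} {a b : ℤ} (h : a ≤ b) : DSle S a ⊆ DSle S b := by
  apply filt_subset
  · rintro X ⟨Y, hY, i, hi, he⟩
    exact subset_filt _ ⟨Y, hY, i, by omega, he⟩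
  · exact isFiltClosed_filt _

lemma DSge_mono {S : Set C} {a b : ℤ} (h : a ≤ b) : DSge S b ⊆ DSge S a := by
  apply filt_subset
  · rintro X ⟨Y, hY, i, hi, he⟩
    exact subset_filt _ ⟨Y, hY, i, by omega, he⟩
  · exact isFiltClosed_filt _

lemma mem_imageSet_functor_iff (ν : C ≌ C) {P : Set C}
    (hP : ∀ X Y : C, (X ≅ Y) → X ∈ P → Y ∈ P) (X : C) :
    X ∈ imageSet ν.functor P ↔ ν.inverse.obj X ∈ P := by
  constructor
  · rintro ⟨Y, hY, ⟨e⟩⟩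
    exact hP Y _ (ν.unitIso.app Y ≪≫ (ν.inverse.mapIso e).symm) hY
  · intro h
    exact ⟨ν.inverse.obj X, h, ⟨(ν.counitIso.app X).symm⟩⟩

lemma mem_imageSet_inverse_iff (ν : C ≌ C) {P : Set C}
    (hP : ∀ X Y : C, (X ≅ Y) → X ∈ P → Y ∈ P) (X : C) :
    X ∈ imageSet ν.inverse P ↔ ν.functor.obj X ∈ P := by
  constructor
  · rintro ⟨Y, hY, ⟨e⟩⟩
    exact hP Y _ (ν.functor.mapIso e ≪≫ ν.counitIso.app Y).symm hY
  · intro h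
    exact ⟨ν.functor.obj X, h, ⟨ν.unitIso.app X⟩⟩

/-- Commutation of the inverse of `ν` with shifts, at the level of objects. -/
noncomputable def invShift (ν : C ≌ C) [ν.functor.CommShift ℤ] (n : ℤ) (X : C) :
    ν.inverse.obj (X⟦n⟧) ≅ (ν.inverse.obj X)⟦n⟧ :=
  ν.inverse.mapIso ((shiftFunctor C n).mapIso (ν.counitIso.app X).symm ≪≫
    (ν.functor.commShiftIso n).symm.app (ν.inverse.obj X)) ≪≫
    (ν.unitIso.app _).symm

lemma o_shift {S : Set C}
    (o : ∀ A ∈ DSle S 0, ∀ B ∈ DSge S 1, ∀ f : A ⟶ B, f = 0) (k : ℤ) :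
    ∀ A ∈ DSle S k, ∀ B ∈ DSge S (k + 1), ∀ f : A ⟶ B, f = 0 := by
  intro A hA B hB f
  have hA' : A⟦k⟧ ∈ DSle S 0 := by
    have h := DSle_shift k hA; rw [sub_self] at h; exact h
  have hB' : B⟦k⟧ ∈ DSge S 1 := by
    have h := DSge_shift k hB
    have e : k + 1 - k = 1 := by ring
    rw [e] at h; exact h
  exact (homzero_shift k).2 (fun g => o _ hA' _ hB' g) f

lemma r3_shift {S : Set C}
    (r3 : DSge S 1 = {X : C | ∀ A ∈ DSle S 0, ∀ f : A ⟶ X, f = 0}) (k : ℤ) {X : C}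
    (h : ∀ A ∈ DSle S k, ∀ f : A ⟶ X, f = 0) : X ∈ DSge S (k + 1) := by
  have hX : X⟦k⟧ ∈ DSge S 1 := by
    rw [r3]
    intro A₀ hA₀ f
    have hA : A₀⟦-k⟧ ∈ DSle S k := by
      have h2 := DSle_shift (-k) hA₀
      have e : (0 : ℤ) - -k = k := by ring
      rw [e] at h2; exact h2
    exact homzero_of_iso (shiftNegShift A₀ k).symm (Iso.refl _)
      ((homzero_shift k).1 (h _ hA)) f
  have hiff := DSge_shift_iff (S := S) (a := k + 1) k (X := X)
  have e : k + 1 - k = 1 := by ring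
  rw [e] at hiff
  exact hiff.2 hX

lemma r4_shift {S : Set C}
    (r4 : DSle S 0 = {Y : C | ∀ B ∈ DSge S 1, ∀ f : Y ⟶ B, f = 0}) (k : ℤ) {X : C}
    (h : ∀ B ∈ DSge S (k + 1), ∀ f : X ⟶ B, f = 0) : X ∈ DSle S k := by
  have hX : X⟦k⟧ ∈ DSle S 0 := by
    rw [r4]
    intro B₀ hB₀ f
    have hB : B₀⟦-k⟧ ∈ DSge S (k + 1) := by
      have h2 := DSge_shift (-k) hB₀
      have e : (1 : ℤ) - -k = k + 1 := by ring
      rw [e] at h2; exact h2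
    exact homzero_of_iso (Iso.refl _) (shiftNegShift B₀ k)
      ((homzero_shift k).1 (h _ hB)) f
  have hiff := DSle_shift_iff (S := S) (a := k) k (X := X)
  rw [sub_self] at hiff
  exact hiff.2 hX

lemma mem_DSle_self {S : Set C} {X : C} (hX : X ∈ Filt S) (n : ℤ) (hn : 0 ≤ n) :
    X ∈ DSle S n := by
  refine filt_subset ?_ (isFiltClosed_filt _) hX
  intro Y hY
  exact subset_filt _ ⟨Y, hY, 0, by omega, ⟨((shiftFunctorZero C ℤ).app Y).symm⟩⟩

lemma mem_DSge_self {S : Set C} {X : C} (hX : X ∈ Filt S) (n : ℤ) (hn : n ≤ 0) :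
    X ∈ DSge S n := by
  refine filt_subset ?_ (isFiltClosed_filt _) hX
  intro Y hY
  exact subset_filt _ ⟨Y, hY, 0, by omega, ⟨((shiftFunctorZero C ℤ).app Y).symm⟩⟩

end Aux

/-- Let `D` be the bounded derived category of a hereditary algebra (abstracted here as a
triangulated category in which every simple-minded collection generates a bounded
t-structure), with Nakayama autoequivalence `ν`, and let `d ≥ 1`. For simple-minded
collections `S, T` with hearts `ℋ_S = Filt S`, `ℋ_T = Filt T`, the following are
equivalent:
(1) `ℋ_S ⊆ D_T^{≤0} ∩ ν D_T^{≥1−d}`;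
(2) `ℋ_T ⊆ ν⁻¹ D_S^{≤d−1} ∩ D_S^{≥0}`;
(3) `D_S^{≤0} ⊆ D_T^{≤0}` and `D_S^{≥0} ⊆ ν D_T^{≥1−d}`;
(4) `D_T^{≤0} ⊆ ν⁻¹ D_S^{≤d−1}` and `D_T^{≥0} ⊆ D_S^{≥0}`. -/
theorem smc_heart_inclusions_tfae
    (ν : C ≌ C) [ν.functor.CommShift ℤ] [ν.functor.IsTriangulated]
    (htstr : ∀ U : Set C, IsSMC U → IsBoundedTStructure (DSle U 0) (DSge U 1))
    (d : ℤ) (hd : 1 ≤ d) (S T : Set C) (hS : IsSMC S) (hT : IsSMC T) :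
    [Filt S ⊆ DSle T 0 ∩ imageSet ν.functor (DSge T (1 - d)),
     Filt T ⊆ imageSet ν.inverse (DSle S (d - 1)) ∩ DSge S 0,
     DSle S 0 ⊆ DSle T 0 ∧ DSge S 0 ⊆ imageSet ν.functor (DSge T (1 - d)),
     DSle T 0 ⊆ imageSet ν.inverse (DSle S (d - 1)) ∧ DSge T 0 ⊆ DSge S 0].TFAE := by
  obtain ⟨oS, -, r3S, r4S, -, -, -⟩ := htstr S hS
  obtain ⟨oT, -, r3T, r4T, -, -, -⟩ := htstr T hT
  have isoC : ∀ (U : Set C) (n : ℤ), ∀ X Y : C, (X ≅ Y) → X ∈ DSle U n → Y ∈ DSle U n :=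
    fun U n => (isFiltClosed_filt _).2.1
  have isoG : ∀ (U : Set C) (n : ℤ), ∀ X Y : C, (X ≅ Y) → X ∈ DSge U n → Y ∈ DSge U n :=
    fun U n => (isFiltClosed_filt _).2.1
  -- pointwise reformulation of (4a)
  have h4a_iff : (DSle T 0 ⊆ imageSet ν.inverse (DSle S (d - 1))) ↔
      (∀ X ∈ DSle T 0, ν.functor.obj X ∈ DSle S (d - 1)) := by
    constructor
    · intro h X hX; exact (mem_imageSet_inverse_iff ν (isoC S (d - 1)) X).1 (h hX)
    · intro h X hX; exact (mem_imageSet_inverse_iff ν (isoC S (d - 1)) X).2 (h X hX)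
  -- pointwise reformulation of (3b)
  have h3b_iff : (DSge S 0 ⊆ imageSet ν.functor (DSge T (1 - d))) ↔
      (∀ X ∈ DSge S 0, ν.inverse.obj X ∈ DSge T (1 - d)) := by
    constructor
    · intro h X hX; exact (mem_imageSet_functor_iff ν (isoG T (1 - d)) X).1 (h hX)
    · intro h X hX; exact (mem_imageSet_functor_iff ν (isoG T (1 - d)) X).2 (h X hX)
  -- shifting the pointwise form of (3b)
  have hP3b : (∀ X ∈ DSge S 0, ν.inverse.obj X ∈ DSge T (1 - d)) ↔
      (∀ W ∈ DSge S d, ν.inverse.obj W ∈ DSge T 1) := by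
    constructor
    · intro h W hW
      have h1 : W⟦d⟧ ∈ DSge S 0 := by
        have h0 := DSge_shift d hW; rw [sub_self] at h0; exact h0
      have h3 : (ν.inverse.obj W)⟦d⟧ ∈ DSge T (1 - d) :=
        isoG T (1 - d) _ _ (invShift ν d W) (h _ h1)
      exact (DSge_shift_iff (S := T) (a := 1) d (X := ν.inverse.obj W)).2 h3
    · intro h X hX
      have h1 : X⟦-d⟧ ∈ DSge S d := by
        have h0 := DSge_shift (-d) hX
        have e : (0 : ℤ) - -d = d := by ring
        rw [e] at h0; exact h0
      have h3 : (ν.inverse.obj X)⟦-d⟧ ∈ DSge T 1 :=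
        isoG T 1 _ _ (invShift ν (-d) X) (h _ h1)
      have hiff := DSge_shift_iff (S := T) (a := 1 - d) (-d) (X := ν.inverse.obj X)
      have e : 1 - d - -d = 1 := by ring
      rw [e] at hiff
      exact hiff.2 h3
  -- the central orthogonality argument: (4a) pointwise ↔ (3b) shifted pointwise
  have hcentral : (∀ X ∈ DSle T 0, ν.functor.obj X ∈ DSle S (d - 1)) ↔
      (∀ W ∈ DSge S d, ν.inverse.obj W ∈ DSge T 1) := by
    have ed : d - 1 + 1 = d := by ring
    constructor
    · intro h W hW
      rw [r3T]
      simp only [Set.mem_setOf_eq]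
      intro A hA f
      have hW' : W ∈ DSge S (d - 1 + 1) := by rw [ed]; exact hW
      have h0 : ∀ g : ν.functor.obj A ⟶ W, g = 0 :=
        fun g => o_shift oS (d - 1) _ (h A hA) _ hW' g
      exact (homzero_equiv ν).2 h0 f
    · intro h X hX
      apply r4_shift r4S (d - 1)
      intro B hB f
      have hB' : B ∈ DSge S d := by rw [ed] at hB; exact hB
      have h0 : ∀ g : X ⟶ ν.inverse.obj B, g = 0 := fun g => oT X hX _ (h B hB') g
      exact (homzero_equiv ν).1 h0 f
  -- (3a) ↔ coaisle inclusion at level 1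
  have hA : DSle S 0 ⊆ DSle T 0 ↔ DSge T 1 ⊆ DSge S 1 := by
    constructor
    · intro h X hX
      rw [r3S]
      simp only [Set.mem_setOf_eq]
      intro A hA' f
      exact oT A (h hA') X hX f
    · intro h X hX
      rw [r4T]
      simp only [Set.mem_setOf_eq]
      intro B hB f
      exact oS X hX B (h hB) f
  have hAA : DSge T 1 ⊆ DSge S 1 ↔ DSge T 0 ⊆ DSge S 0 := by
    constructor
    · intro h X hX
      have h1 : X⟦-1⟧ ∈ DSge T 1 := by
        have h0 := DSge_shift (-1) hX
        have e : (0 : ℤ) - -1 = 1 := by ring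
        rw [e] at h0; exact h0
      have h2 : X⟦-1⟧ ∈ DSge S 1 := h h1
      have hiff := DSge_shift_iff (S := S) (a := 0) (-1) (X := X)
      have e : (0 : ℤ) - -1 = 1 := by ring
      rw [e] at hiff
      exact hiff.2 h2
    · intro h X hX
      have h1 : X⟦(1 : ℤ)⟧ ∈ DSge T 0 := by
        have h0 := DSge_shift (1 : ℤ) hX; rw [sub_self] at h0; exact h0
      have h2 : X⟦(1 : ℤ)⟧ ∈ DSge S 0 := h h1
      have hiff := DSge_shift_iff (S := S) (a := 1) (1 : ℤ) (X := X)
      rw [sub_self] at hiff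
      exact hiff.2 h2
  have h3b4a : (DSge S 0 ⊆ imageSet ν.functor (DSge T (1 - d))) ↔
      (DSle T 0 ⊆ imageSet ν.inverse (DSle S (d - 1))) :=
    h3b_iff.trans ((hP3b.trans hcentral.symm).trans h4a_iff.symm)
  tfae_have 3 ↔ 4 := by
    constructor
    · rintro ⟨h3a, h3b⟩
      exact ⟨h3b4a.1 h3b, (hA.trans hAA).1 h3a⟩
    · rintro ⟨h4a, h4b⟩
      exact ⟨(hA.trans hAA).2 h4b, h3b4a.2 h4a⟩
  tfae_have 3 → 1 := by
    rintro ⟨h3a, h3b⟩ X hX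
    exact ⟨h3a (mem_DSle_self hX 0 le_rfl), h3b (mem_DSge_self hX 0 le_rfl)⟩
  tfae_have 4 → 2 := by
    rintro ⟨h4a, h4b⟩ X hX
    exact ⟨h4a (mem_DSle_self hX 0 le_rfl), h4b (mem_DSge_self hX 0 le_rfl)⟩
  tfae_have 1 → 3 := by
    intro h1
    constructor
    · apply filt_subset _ (isFiltClosed_filt _)
      rintro X ⟨Y, hY, i, hi, ⟨e⟩⟩
      have hY0 : Y ∈ DSle T 0 := (h1 (subset_filt S hY)).1
      have h3 : Y⟦i⟧ ∈ DSle T 0 :=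
        DSle_mono (by omega : (0 : ℤ) - i ≤ 0) (DSle_shift i hY0)
      exact isoC T 0 _ _ e.symm h3
    · have hsub : DSge S 0 ⊆ {X : C | ν.inverse.obj X ∈ DSge T (1 - d)} := by
        apply filt_subset _ (isFiltClosed_preimage_inv ν (isFiltClosed_filt _))
        rintro X ⟨Y, hY, i, hi, ⟨e⟩⟩
        have hY0 : ν.inverse.obj Y ∈ DSge T (1 - d) :=
          (mem_imageSet_functor_iff ν (isoG T (1 - d)) Y).1 (h1 (subset_filt S hY)).2
        have h3 : (ν.inverse.obj Y)⟦i⟧ ∈ DSge T (1 - d) :=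
          DSge_mono (by omega : (1 : ℤ) - d ≤ 1 - d - i) (DSge_shift i hY0)
        exact isoG T (1 - d) _ _ ((ν.inverse.mapIso e ≪≫ invShift ν i Y).symm) h3
      exact fun X hX => (mem_imageSet_functor_iff ν (isoG T (1 - d)) X).2 (hsub hX)
  tfae_have 2 → 4 := by
    intro h2
    constructor
    · have hsub : DSle T 0 ⊆ {X : C | ν.functor.obj X ∈ DSle S (d - 1)} := by
        apply filt_subset _ (isFiltClosed_preimage ν.functor (isFiltClosed_filt _))
        rintro X ⟨Y, hY, i, hi, ⟨e⟩⟩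
        have hY0 : ν.functor.obj Y ∈ DSle S (d - 1) :=
          (mem_imageSet_inverse_iff ν (isoC S (d - 1)) Y).1 (h2 (subset_filt T hY)).1
        have h3 : (ν.functor.obj Y)⟦i⟧ ∈ DSle S (d - 1) :=
          DSle_mono (by omega : d - 1 - i ≤ d - 1) (DSle_shift i hY0)
        exact isoC S (d - 1) _ _
          ((ν.functor.mapIso e ≪≫ (ν.functor.commShiftIso i).app Y).symm) h3
      exact fun X hX => (mem_imageSet_inverse_iff ν (isoC S (d - 1)) X).2 (hsub hX)
    · apply filt_subset _ (isFiltClosed_filt _)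
      rintro X ⟨Y, hY, i, hi, ⟨e⟩⟩
      have hY0 : Y ∈ DSge S 0 := (h2 (subset_filt T hY)).2
      have h3 : Y⟦i⟧ ∈ DSge S 0 :=
        DSge_mono (by omega : (0 : ℤ) ≤ 0 - i) (DSge_shift i hY0)
      exact isoG S 0 _ _ e.symm h3
  tfae_finish
end

section
/- Let T be a k-linear triangulated category with finite total Hom spaces, and let (X_1, …, X_n) be an exceptional sequence with left-mutated sequence (X_n^∨, …, X_1^∨) = μ⁺_rev(X_1, …, X_n). Then for all 1 ≤ s, t ≤ n and m ∈ ℤ, Hom_T(X_s, X_t^∨[m]) is a division ring if s = t and m = 0, and vanishes otherwise. -/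
open CategoryTheory CategoryTheory.Limits CategoryTheory.Pretriangulated

universe v u u'

variable {C : Type u} [Category.{v} C] [Preadditive C] [HasZeroObject C]
  [HasShift C ℤ] [∀ n : ℤ, (shiftFunctor C n).Additive] [Pretriangulated C]

/-- `addShifts X`: the additive closure of all shifts of `X`, i.e. the smallest class
containing every `X⟦n⟧` and the zero objects, closed under isomorphisms, retracts
(direct summands), and finite direct sums (split extensions). -/
def addShifts (X : C) : Set C :=
  ⋂₀ {P : Set C | (∀ n : ℤ, X⟦n⟧ ∈ P) ∧
    (∀ A : C, Limits.IsZero A → A ∈ P) ∧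
    (∀ A B : C, (A ≅ B) → A ∈ P → B ∈ P) ∧
    (∀ A B : C, ∀ r : A ⟶ B, ∀ s : B ⟶ A, s ≫ r = 𝟙 B → A ∈ P → B ∈ P) ∧
    (∀ T ∈ distTriang C, T.mor₃ = 0 → T.obj₁ ∈ P → T.obj₃ ∈ P → T.obj₂ ∈ P)}

/-- `IsLeftMutation X Y Y'` : `Y'` is the left mutation of `Y` over the exceptional object
`X`, i.e. there is a distinguished triangle `E → Y → Y' → E[1]` (equivalently
`Y'[-1] → E → Y → Y'`) where `E = ⊕_i Hom(X[i], Y) ⊗ X[i]` lies in `add(X[ℤ])` and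
`Hom(X[n], Y') = 0` for all `n ∈ ℤ`. -/
def IsLeftMutation (X Y Y' : C) : Prop :=
  ∃ (E : C) (f : E ⟶ Y) (g : Y ⟶ Y') (h : Y' ⟶ E⟦(1 : ℤ)⟧),
    Triangle.mk f g h ∈ (distTriang C) ∧ E ∈ addShifts X ∧
    (∀ n : ℤ, ∀ u : X⟦n⟧ ⟶ Y', u = 0)

/-- `IsDualSeq X Y` : `Y = (X_n^∨, …, X_1^∨)` (recorded as `Y i = X_i^∨`) is the total
left mutation `μ⁺_rev(X_1, …, X_n)` of the exceptional sequence `X`: each `X_i^∨` is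
obtained from `X_i` by successively left-mutating over `X_1^∨, …, X_{i−1}^∨`. -/
def IsDualSeq {n : ℕ} (X Y : Fin n → C) : Prop :=
  ∀ i : Fin n, ∃ Z : ℕ → C, Z 0 = X i ∧
    (∀ j : Fin n, (j : ℕ) < (i : ℕ) → IsLeftMutation (Y j) (Z j) (Z (j + 1))) ∧
    Z (i : ℕ) = Y i

/-- An exceptional object: its endomorphism ring is a division ring and it has no
self-extensions in nonzero degrees. -/
def IsExceptional (X : C) : Prop :=
  (¬ Limits.IsZero X ∧ ∀ f : X ⟶ X, f ≠ 0 → IsIso f) ∧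
  (∀ i : ℤ, i ≠ 0 → ∀ f : X ⟶ X⟦i⟧, f = 0)

/-- An exceptional sequence `(X_1, …, X_n)`. -/
def IsExceptionalSeq {n : ℕ} (X : Fin n → C) : Prop :=
  (∀ i : Fin n, IsExceptional (X i)) ∧
  (∀ i j : Fin n, (j : ℕ) < (i : ℕ) → ∀ l : ℤ, ∀ f : X i ⟶ (X j)⟦l⟧, f = 0)


namespace DualExcAux

/-- `Perp A B` : every morphism `A ⟶ B⟦m⟧` vanishes. -/
def Perp (A B : C) : Prop := ∀ m : ℤ, ∀ f : A ⟶ B⟦m⟧, f = 0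

lemma Perp.zero_shift₂ {A B : C} (h : Perp A B) {m p : ℤ} (f : A ⟶ (B⟦m⟧)⟦p⟧) : f = 0 := by
  have h0 : f ≫ ((shiftFunctorAdd' C m p (m + p) rfl).app B).inv = 0 := h (m + p) _
  calc f = (f ≫ ((shiftFunctorAdd' C m p (m + p) rfl).app B).inv) ≫
        ((shiftFunctorAdd' C m p (m + p) rfl).app B).hom := by
        rw [Category.assoc, Iso.inv_hom_id, Category.comp_id]
    _ = 0 := by rw [h0, zero_comp]

lemma Perp.shift_left {A B : C} (h : Perp A B) (l : ℤ) : Perp (A⟦l⟧) B := by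
  intro m f
  have h0 : ((shiftFunctorCompIsoId C l (-l) (by omega)).app A).inv ≫
      (shiftFunctor C (-l)).map f = 0 := h.zero_shift₂ _
  have h1 : (shiftFunctor C (-l)).map f = 0 := by
    calc (shiftFunctor C (-l)).map f
        = ((shiftFunctorCompIsoId C l (-l) (by omega)).app A).hom ≫
          (((shiftFunctorCompIsoId C l (-l) (by omega)).app A).inv ≫
            (shiftFunctor C (-l)).map f) := by
          rw [← Category.assoc, Iso.hom_inv_id, Category.id_comp]
      _ = 0 := by rw [h0, comp_zero]
  apply (shiftFunctor C (-l)).map_injective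
  rw [h1, Functor.map_zero]

lemma perp_of_hom_shift_src {A B : C} (hv : ∀ l : ℤ, ∀ u : A⟦l⟧ ⟶ B, u = 0) : Perp A B := by
  intro m f
  have h0 : (shiftFunctor C (-m)).map f ≫
      ((shiftFunctorCompIsoId C m (-m) (by omega)).app B).hom = 0 := hv (-m) _
  have h1 : (shiftFunctor C (-m)).map f = 0 := by
    calc (shiftFunctor C (-m)).map f
        = ((shiftFunctor C (-m)).map f ≫
            ((shiftFunctorCompIsoId C m (-m) (by omega)).app B).hom) ≫
          ((shiftFunctorCompIsoId C m (-m) (by omega)).app B).inv := by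
          rw [Category.assoc, Iso.hom_inv_id, Category.comp_id]
      _ = 0 := by rw [h0, zero_comp]
  apply (shiftFunctor C (-m)).map_injective
  rw [h1, Functor.map_zero]

lemma Perp.obj₂ {W : C} (T : Triangle C) (hT : T ∈ distTriang C)
    (h1 : Perp W T.obj₁) (h3 : Perp W T.obj₃) : Perp W T.obj₂ := by
  intro m f
  have hT' : (Triangle.shiftFunctor C m).obj T ∈ distTriang C :=
    Triangle.shift_distinguished T hT m
  have h0 : f ≫ ((Triangle.shiftFunctor C m).obj T).mor₂ = 0 := h3 m _
  obtain ⟨g, hg⟩ := Triangle.coyoneda_exact₂ _ hT' f h0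
  rw [hg, h1 m g]; exact zero_comp

lemma Perp.obj₃ {W : C} (T : Triangle C) (hT : T ∈ distTriang C)
    (h1 : Perp W T.obj₁) (h2 : Perp W T.obj₂) : Perp W T.obj₃ := by
  intro m f
  have hT' : (Triangle.shiftFunctor C m).obj T ∈ distTriang C :=
    Triangle.shift_distinguished T hT m
  have h0 : f ≫ ((Triangle.shiftFunctor C m).obj T).mor₃ = 0 := h1.zero_shift₂ _
  obtain ⟨g, hg⟩ := Triangle.coyoneda_exact₃ _ hT' f h0
  rw [hg, h2 m g]; exact zero_comp

lemma Perp.src₂ {M : C} (T : Triangle C) (hT : T ∈ distTriang C)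
    (h1 : Perp T.obj₁ M) (h3 : Perp T.obj₃ M) : Perp T.obj₂ M := by
  intro m f
  obtain ⟨g, hg⟩ := Triangle.yoneda_exact₂ T hT f (h1 m _)
  rw [hg, h3 m g, comp_zero]

lemma Perp.of_mem_addShifts_right {W A E : C} (h : Perp W A) (hE : E ∈ addShifts A) :
    Perp W E := by
  refine Set.mem_sInter.1 hE {B | Perp W B} ⟨fun l m f => h.zero_shift₂ f,
    fun B hB m f => (((shiftFunctor C m).map_isZero hB).eq_of_tgt f 0),
    fun B B' e hB m f => ?_, fun B B' r s hsr hB m f => ?_,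
    fun T hT _ h1 h3 => Perp.obj₂ T hT h1 h3⟩
  · have h0 : f ≫ (shiftFunctor C m).map e.inv = 0 := hB m (f ≫ (shiftFunctor C m).map e.inv)
    calc f = (f ≫ (shiftFunctor C m).map e.inv) ≫ (shiftFunctor C m).map e.hom := by
          rw [Category.assoc, ← Functor.map_comp, Iso.inv_hom_id, CategoryTheory.Functor.map_id,
            Category.comp_id]
      _ = 0 := by rw [h0, zero_comp]
  · have h0 : f ≫ (shiftFunctor C m).map s = 0 := hB m (f ≫ (shiftFunctor C m).map s)
    calc f = (f ≫ (shiftFunctor C m).map s) ≫ (shiftFunctor C m).map r := by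
          rw [Category.assoc, ← Functor.map_comp, hsr, CategoryTheory.Functor.map_id, Category.comp_id]
      _ = 0 := by rw [h0, zero_comp]

lemma Perp.of_mem_addShifts_left {W A E : C} (h : Perp A W) (hE : E ∈ addShifts A) :
    Perp E W := by
  refine Set.mem_sInter.1 hE {B | Perp B W} ⟨fun l => h.shift_left l,
    fun B hB m f => hB.eq_of_src f 0,
    fun B B' e hB m f => ?_, fun B B' r s hsr hB m f => ?_,
    fun T hT _ h1 h3 => Perp.src₂ T hT h1 h3⟩
  · have h0 : e.hom ≫ f = 0 := hB m (e.hom ≫ f)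
    calc f = e.inv ≫ (e.hom ≫ f) := by rw [← Category.assoc, Iso.inv_hom_id, Category.id_comp]
      _ = 0 := by rw [h0, comp_zero]
  · have h0 : r ≫ f = 0 := hB m (r ≫ f)
    calc f = s ≫ (r ≫ f) := by rw [← Category.assoc, hsr, Category.id_comp]
      _ = 0 := by rw [h0, comp_zero]

lemma step_equiv {W E Y Y' : C} (f : E ⟶ Y) (g : Y ⟶ Y') (h : Y' ⟶ E⟦(1 : ℤ)⟧)
    (hT : Triangle.mk f g h ∈ distTriang C) (hPE : Perp W E) (m : ℤ) :
    Nonempty ((W ⟶ Y⟦m⟧) ≃+ (W ⟶ Y'⟦m⟧)) := by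
  have hT' : (Triangle.shiftFunctor C m).obj (Triangle.mk f g h) ∈ distTriang C :=
    Triangle.shift_distinguished _ hT m
  refine ⟨AddEquiv.ofBijective (AddMonoidHom.mk'
    (fun u => u ≫ ((Triangle.shiftFunctor C m).obj (Triangle.mk f g h)).mor₂)
    (fun u v => Preadditive.add_comp _ _ _ _ _ _)) ⟨?_, ?_⟩⟩
  · intro u v huv
    have h0 : (u - v) ≫ ((Triangle.shiftFunctor C m).obj (Triangle.mk f g h)).mor₂ = 0 := by
      refine (Preadditive.sub_comp u v _).trans ?_
      exact sub_eq_zero.mpr huv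
    obtain ⟨w, hw⟩ := Triangle.coyoneda_exact₂ _ hT' (u - v) h0
    have : u - v = 0 := by rw [hw, hPE m w]; exact zero_comp
    exact sub_eq_zero.mp this
  · intro w
    have h0 : w ≫ ((Triangle.shiftFunctor C m).obj (Triangle.mk f g h)).mor₃ = 0 :=
      hPE.zero_shift₂ _
    obtain ⟨u, hu⟩ := Triangle.coyoneda_exact₃ _ hT' w h0
    exact ⟨u, hu.symm⟩

/-- Composing with the zero-shift isomorphism. -/
def homShiftZeroEquiv (W B : C) : (W ⟶ B⟦(0 : ℤ)⟧) ≃+ (W ⟶ B) where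
  toFun f := f ≫ (shiftFunctorZero C ℤ).hom.app B
  invFun g := g ≫ (shiftFunctorZero C ℤ).inv.app B
  left_inv f := by dsimp only; rw [Category.assoc, Iso.hom_inv_id_app]; exact Category.comp_id f
  right_inv g := by dsimp only; rw [Category.assoc, Iso.inv_hom_id_app]; exact Category.comp_id g
  map_add' f g := Preadditive.add_comp _ _ _ _ _ _

lemma key {n : ℕ} {X Y : Fin n → C} (hexc : IsExceptionalSeq X) (hdual : IsDualSeq X Y) :
    ∀ t : Fin n,
      (∀ s : Fin n, (t : ℕ) < (s : ℕ) → Perp (X s) (Y t)) ∧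
      (∀ j : Fin n, (j : ℕ) < (t : ℕ) → Perp (Y j) (Y t)) := by
  have H : ∀ N : ℕ, ∀ t : Fin n, (t : ℕ) < N →
      ((∀ s : Fin n, (t : ℕ) < (s : ℕ) → Perp (X s) (Y t)) ∧
       (∀ j : Fin n, (j : ℕ) < (t : ℕ) → Perp (Y j) (Y t))) := by
    intro N
    induction N with
    | zero => intro t ht; omega
    | succ N ih =>
      intro t ht
      by_cases htN : (t : ℕ) < N
      · exact ih t htN
      · have htN' : (t : ℕ) = N := by omega
        obtain ⟨Z, hZ0, hmut, hZt⟩ := hdual t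
        constructor
        · intro s hs
          have chain : ∀ c : ℕ, c ≤ (t : ℕ) → Perp (X s) (Z c) := by
            intro c
            induction c with
            | zero =>
              intro _
              rw [hZ0]
              exact fun m f => hexc.2 s t hs m f
            | succ c ihc =>
              intro hc1
              have hc : c < (t : ℕ) := by omega
              have hcn : c < n := lt_trans hc t.isLt
              obtain ⟨E, f, g, h, hT, hE, -⟩ := hmut ⟨c, hcn⟩ hc
              have hYc : Perp (X s) (Y ⟨c, hcn⟩) :=
                (ih ⟨c, hcn⟩ (htN' ▸ hc)).1 s (lt_trans hc hs)
              have hPE : Perp (X s) E := hYc.of_mem_addShifts_right hE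
              exact Perp.obj₃ (Triangle.mk f g h) hT hPE (ihc (le_of_lt hc))
          have h0 := chain (t : ℕ) le_rfl
          rwa [hZt] at h0
        · intro j0 hj0
          have chain : ∀ c : ℕ, (j0 : ℕ) + 1 ≤ c → c ≤ (t : ℕ) → Perp (Y j0) (Z c) := by
            intro c
            induction c with
            | zero => intro h1 _; omega
            | succ c ihc =>
              intro h1 h2
              by_cases hbase : (j0 : ℕ) = c
              · obtain ⟨E, f, g, h, hT, hE, hv⟩ := hmut j0 hj0
                have h0 : Perp (Y j0) (Z ((j0 : ℕ) + 1)) := perp_of_hom_shift_src hv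
                rwa [hbase] at h0
              · have h1' : (j0 : ℕ) + 1 ≤ c := by omega
                have hc : c < (t : ℕ) := by omega
                have hcn : c < n := lt_trans hc t.isLt
                obtain ⟨E, f, g, h, hT, hE, -⟩ := hmut ⟨c, hcn⟩ hc
                have hYc : Perp (Y j0) (Y ⟨c, hcn⟩) :=
                  (ih ⟨c, hcn⟩ (htN' ▸ hc)).2 j0 h1'
                have hPE : Perp (Y j0) E := hYc.of_mem_addShifts_right hE
                exact Perp.obj₃ (Triangle.mk f g h) hT hPE (ihc h1' (le_of_lt hc))
          have h0 := chain (t : ℕ) (by omega) le_rfl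
          rwa [hZt] at h0
  exact fun t => H ((t : ℕ) + 1) t (Nat.lt_succ_self _)

end DualExcAux

/-- Let `T` be a `k`-linear triangulated category with finite total Hom-spaces, and let
`(X_1, …, X_n)` be an exceptional sequence with totally left-mutated (dual) sequence
`(X_n^∨, …, X_1^∨) = μ⁺_rev(X_1, …, X_n)`. Then for all `1 ≤ s, t ≤ n` and `m ∈ ℤ`,
`Hom(X_s, X_t^∨[m])` is a division ring (isomorphic to `End(X_s)`) if `s = t` and
`m = 0`, and vanishes otherwise. -/
theorem dual_exceptional_sequence_hom
    {k : Type u'} [Field k] [Linear k C]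
    (hfindim : ∀ A B : C, FiniteDimensional k (A ⟶ B))
    (hlocfin : ∀ A B : C, Set.Finite {i : ℤ | ∃ f : A ⟶ B⟦i⟧, f ≠ 0})
    {n : ℕ} (X Y : Fin n → C) (hexc : IsExceptionalSeq X) (hdual : IsDualSeq X Y) :
    ∀ s t : Fin n, ∀ m : ℤ,
      (s = t ∧ m = 0 → Nonempty ((X s ⟶ (Y t)⟦m⟧) ≃+ (X s ⟶ X s))) ∧
      (¬ (s = t ∧ m = 0) → ∀ f : X s ⟶ (Y t)⟦m⟧, f = 0) := by
  classical
  intro s t m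
  have claim2 : ∀ s t : Fin n, (s : ℕ) < (t : ℕ) → DualExcAux.Perp (X s) (Y t) := by
    intro s t hst
    obtain ⟨Z, hZ0, hmut, hZs⟩ := hdual s
    have chain : ∀ d c : ℕ, c + d = (s : ℕ) → DualExcAux.Perp (Z c) (Y t) := by
      intro d
      induction d with
      | zero =>
        intro c hc
        have hc' : c = (s : ℕ) := by omega
        subst hc'
        rw [hZs]
        exact (DualExcAux.key hexc hdual t).2 s hst
      | succ d ihd =>
        intro c hc
        have hcs : c < (s : ℕ) := by omega
        have hcn : c < n := lt_trans hcs s.isLt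
        obtain ⟨E, f, g, h, hT, hE, -⟩ := hmut ⟨c, hcn⟩ hcs
        have hYc : DualExcAux.Perp (Y ⟨c, hcn⟩) (Y t) :=
          (DualExcAux.key hexc hdual t).2 ⟨c, hcn⟩ (lt_trans hcs hst)
        have hPE : DualExcAux.Perp E (Y t) := hYc.of_mem_addShifts_left hE
        exact DualExcAux.Perp.src₂ (Triangle.mk f g h) hT hPE (ihd (c + 1) (by omega))
    have h0 := chain (s : ℕ) 0 (by omega)
    rwa [hZ0] at h0
  have claim3 : ∀ s : Fin n, ∀ m : ℤ,
      Nonempty ((X s ⟶ (X s)⟦m⟧) ≃+ (X s ⟶ (Y s)⟦m⟧)) := by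
    intro s m
    obtain ⟨Z, hZ0, hmut, hZs⟩ := hdual s
    have chain : ∀ c : ℕ, c ≤ (s : ℕ) →
        Nonempty ((X s ⟶ (X s)⟦m⟧) ≃+ (X s ⟶ (Z c)⟦m⟧)) := by
      intro c
      induction c with
      | zero => intro _; rw [hZ0]; exact ⟨AddEquiv.refl _⟩
      | succ c ihc =>
        intro hc1
        have hcs : c < (s : ℕ) := by omega
        have hcn : c < n := lt_trans hcs s.isLt
        obtain ⟨E, f, g, h, hT, hE, -⟩ := hmut ⟨c, hcn⟩ hcs
        have hYc : DualExcAux.Perp (X s) (Y ⟨c, hcn⟩) :=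
          (DualExcAux.key hexc hdual ⟨c, hcn⟩).1 s hcs
        have hPE : DualExcAux.Perp (X s) E := hYc.of_mem_addShifts_right hE
        obtain ⟨e0⟩ := ihc (le_of_lt hcs)
        obtain ⟨e1⟩ := DualExcAux.step_equiv f g h hT hPE m
        exact ⟨e0.trans e1⟩
    have h0 := chain (s : ℕ) le_rfl
    rwa [hZs] at h0
  constructor
  · rintro ⟨rfl, rfl⟩
    obtain ⟨e⟩ := claim3 s 0
    exact ⟨e.symm.trans (DualExcAux.homShiftZeroEquiv _ _)⟩
  · intro hne f
    rcases eq_or_ne s t with rfl | hst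
    · have hm : m ≠ 0 := fun h0 => hne ⟨rfl, h0⟩
      obtain ⟨e⟩ := claim3 s m
      have h0 : e.symm f = 0 := (hexc.1 s).2 m hm _
      calc f = e (e.symm f) := (e.apply_symm_apply f).symm
        _ = e 0 := by rw [h0]
        _ = 0 := map_zero e
    · rcases lt_or_gt_of_ne (show (s : ℕ) ≠ (t : ℕ) from fun h => hst (Fin.ext h)) with h | h
      · exact claim2 s t h m f
      · exact (DualExcAux.key hexc hdual t).1 s h m f
end
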